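/- arXiv:2601.12238 — 11 statements merged into one kernel-verified Lean document; each statement's English description precedes it below -/
import Mathlib

section
/- Let d ≥ 1 and let μ, L > 0. Let m : ℝ^d → ℝ^d satisfy ⟨m(x) − m(y), x − y⟩ ≥ μ‖x − y‖² and ‖m(x) − m(y)‖ ≤ L‖x − y‖ for all x, y ∈ ℝ^d. Let θ, ξ ∈ ℝ^d, let θ⋆, θ⋆′ ∈ ℝ^d with m(θ⋆′) = 0, and let 0 < γ ≤ min{μ/L², 1/L}. Define the updated iterate θ′ := θ − γ m(θ) − γ ξ and the increment M := −2γ⟨(θ − θ⋆′) − γ m(θ), ξ⟩. Then ‖θ′ − θ⋆′‖² ≤ (1 − γμ/2)‖θ − θ⋆‖² + (2/(γμ))‖θ⋆ − θ⋆′‖² + γ²‖ξ‖² + M. -/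
open scoped InnerProductSpace

private lemma aux2 (n M I γ μ L : ℝ) (h1 : μ * n ^ 2 ≤ I) (h2 : M ≤ L * n)
    (hM : 0 ≤ M) (hn : 0 ≤ n) (hγ : 0 < γ) (hγL : γ * L ^ 2 ≤ μ) :
    n ^ 2 - 2 * (γ * I) + γ ^ 2 * M ^ 2 ≤ (1 - γ * μ) * n ^ 2 := by
  nlinarith [mul_le_mul h2 h2 hM (by nlinarith : (0:ℝ) ≤ L * n),
    mul_le_mul_of_nonneg_left h1 (by positivity : (0:ℝ) ≤ 2 * γ),
    mul_le_mul_of_nonneg_left hγL (by positivity : (0:ℝ) ≤ γ * n ^ 2),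
    sq_nonneg γ]

private lemma aux3 (a b c t : ℝ) (ht : 0 < t) (hc : c ≤ a * b) :
    t * (a ^ 2 + 2 * c + b ^ 2) ≤ t * (1 + t / 2) * a ^ 2 + (t + 2) * b ^ 2 := by
  nlinarith [sq_nonneg (t * a - 2 * b),
    mul_le_mul_of_nonneg_left hc (by positivity : (0:ℝ) ≤ 2 * t)]

private lemma aux4 (t X E A B : ℝ) (ht0 : 0 < t) (ht1 : t ≤ 1)
    (hX : X ≤ (1 - t) * E) (hE : t * E ≤ t * (1 + t / 2) * A + (t + 2) * B)
    (hA : 0 ≤ A) (hB : 0 ≤ B) :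
    t * X ≤ t * (1 - t / 2) * A + 2 * B := by
  nlinarith [mul_le_mul_of_nonneg_left hX (le_of_lt ht0),
    mul_le_mul_of_nonneg_left hE (by linarith : (0:ℝ) ≤ 1 - t),
    mul_nonneg (mul_nonneg (le_of_lt ht0) (le_of_lt ht0)) hA,
    mul_nonneg (mul_nonneg (mul_nonneg (le_of_lt ht0) (le_of_lt ht0)) (le_of_lt ht0)) hA,
    mul_nonneg (mul_nonneg (le_of_lt ht0) (le_of_lt ht0)) hB]

/-- One-step recursive relation for the SGD tracking error under strong monotonicity
and Lipschitz continuity of the (conditional mean) gradient map. -/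
theorem sgd_one_step_tracking_error
    (d : ℕ) (hd : 1 ≤ d) (μ L : ℝ) (hμ : 0 < μ) (hL : 0 < L)
    (m : EuclideanSpace ℝ (Fin d) → EuclideanSpace ℝ (Fin d))
    (hmono : ∀ x y, μ * ‖x - y‖ ^ 2 ≤ ⟪m x - m y, x - y⟫_ℝ)
    (hlip : ∀ x y, ‖m x - m y‖ ≤ L * ‖x - y‖)
    (θ ξ θs θs' : EuclideanSpace ℝ (Fin d))
    (hzero : m θs' = 0)
    (γ : ℝ) (hγ0 : 0 < γ) (hγ : γ ≤ min (μ / L ^ 2) (1 / L)) :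
    ‖θ - γ • m θ - γ • ξ - θs'‖ ^ 2 ≤
      (1 - γ * μ / 2) * ‖θ - θs‖ ^ 2 + 2 / (γ * μ) * ‖θs - θs'‖ ^ 2
        + γ ^ 2 * ‖ξ‖ ^ 2 + (-2 * γ) * ⟪θ - θs' - γ • m θ, ξ⟫_ℝ := by
  have hγ1 : γ ≤ μ / L ^ 2 := le_trans hγ (min_le_left _ _)
  have hγ2 : γ ≤ 1 / L := le_trans hγ (min_le_right _ _)
  -- μ ≤ L
  have hμL : μ ≤ L := by
    have hi : (0 : ℕ) < d := hd
    set x : EuclideanSpace ℝ (Fin d) := EuclideanSpace.single ⟨0, hi⟩ 1 with hx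
    have hxn : ‖x - 0‖ = 1 := by
      simp [hx, EuclideanSpace.norm_single]
    have h1 := hmono x 0
    have h2 := hlip x 0
    have h3 := real_inner_le_norm (m x - m 0) (x - 0)
    rw [hxn] at h1 h2 h3
    nlinarith [norm_nonneg (m x - m 0)]
  have htγμ : γ * μ ≤ 1 := by
    have : γ * L ≤ 1 := by
      rw [le_div_iff₀ hL] at hγ2; linarith
    nlinarith
  have hγL2 : γ * L ^ 2 ≤ μ := by
    rw [le_div_iff₀ (by positivity)] at hγ1; linarith
  have hγμ0 : 0 < γ * μ := mul_pos hγ0 hμ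
  set e : EuclideanSpace ℝ (Fin d) := θ - θs' with he
  have hsplit : θ - γ • m θ - γ • ξ - θs' = (e - γ • m θ) - γ • ξ := by
    rw [he]; abel
  have key1 : ‖θ - γ • m θ - γ • ξ - θs'‖ ^ 2
      = ‖e - γ • m θ‖ ^ 2 + (-2 * γ) * ⟪e - γ • m θ, ξ⟫_ℝ + γ ^ 2 * ‖ξ‖ ^ 2 := by
    rw [hsplit, norm_sub_sq_real, real_inner_smul_right, norm_smul, Real.norm_eq_abs,
      mul_pow, sq_abs]
    ring
  -- contraction step
  have key2 : ‖e - γ • m θ‖ ^ 2 ≤ (1 - γ * μ) * ‖e‖ ^ 2 := by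
    have hm : m θ - m θs' = m θ := by rw [hzero, sub_zero]
    have hmono' := hmono θ θs'
    have hlip' := hlip θ θs'
    rw [hm] at hmono' hlip'
    rw [norm_sub_sq_real, real_inner_smul_right, norm_smul, Real.norm_eq_abs, mul_pow, sq_abs]
    have hcomm : ⟪e, m θ⟫_ℝ = ⟪m θ, θ - θs'⟫_ℝ := by
      rw [real_inner_comm, he]
    have hee : ‖e‖ = ‖θ - θs'‖ := by rw [he]
    rw [hcomm, hee]
    exact aux2 ‖θ - θs'‖ ‖m θ‖ _ γ μ L hmono' hlip' (norm_nonneg _) (norm_nonneg _) hγ0 hγL2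
  -- Young-type splitting
  have key3 : γ * μ * ‖e‖ ^ 2
      ≤ γ * μ * (1 + γ * μ / 2) * ‖θ - θs‖ ^ 2 + (γ * μ + 2) * ‖θs - θs'‖ ^ 2 := by
    have hdecomp : e = (θ - θs) + (θs - θs') := by rw [he]; abel
    rw [hdecomp, norm_add_sq_real]
    exact aux3 ‖θ - θs‖ ‖θs - θs'‖ _ (γ * μ) hγμ0 (real_inner_le_norm _ _)
  rw [key1]
  have key4 : ‖e - γ • m θ‖ ^ 2 ≤ (1 - γ * μ / 2) * ‖θ - θs‖ ^ 2 + 2 / (γ * μ) * ‖θs - θs'‖ ^ 2 := by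
    have h4 := aux4 (γ * μ) (‖e - γ • m θ‖ ^ 2) (‖e‖ ^ 2) (‖θ - θs‖ ^ 2) (‖θs - θs'‖ ^ 2)
      hγμ0 htγμ key2 key3 (sq_nonneg _) (sq_nonneg _)
    have h3 : γ * μ * ((1 - γ * μ / 2) * ‖θ - θs‖ ^ 2 + 2 / (γ * μ) * ‖θs - θs'‖ ^ 2)
        = γ * μ * (1 - γ * μ / 2) * ‖θ - θs‖ ^ 2 + 2 * ‖θs - θs'‖ ^ 2 := by
      field_simp
    have h5 : γ * μ * ‖e - γ • m θ‖ ^ 2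
        ≤ γ * μ * ((1 - γ * μ / 2) * ‖θ - θs‖ ^ 2 + 2 / (γ * μ) * ‖θs - θs'‖ ^ 2) := by
      rw [h3]; exact h4
    exact le_of_mul_le_mul_left h5 hγμ0
  linarith
end

section
/- Work in the nonstationary SGD framework with constant stepsize: let 0 < γ ≤ min{μ/L², 1/L} and θ_{t+1} = θ_t − γ m_{t+1}(θ_t) − γ ξ_{t+1}(θ_t) for all t ≥ 0. Then, pathwise (for every realization), for all t ≥ 0: ‖θ_{t+1} − θ⋆_{t+1}‖² ≤ (1 − γμ/2)^{t+1}‖θ₀ − θ⋆₀‖² + (2/(γμ)) ∑_{ℓ=0}^{t} (1 − γμ/2)^{t−ℓ} ‖Δ_ℓ‖² + γ² ∑_{ℓ=0}^{t} (1 − γμ/2)^{t−ℓ} ‖ξ_{ℓ+1}(θ_ℓ)‖² + ∑_{ℓ=0}^{t} (1 − γμ/2)^{t−ℓ} M_{ℓ+1}, where M_{ℓ+1} := −2γ⟨(θ_ℓ − θ⋆_{ℓ+1}) − γ m_{ℓ+1}(θ_ℓ), ξ_{ℓ+1}(θ_ℓ)⟩. -/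
open scoped InnerProductSpace

lemma sgd_real_young (u B E D : ℝ) (hu0 : 0 < u) (hu1 : u ≤ 1)
    (hB : B ≤ E ^ 2 + 2 * (E * D) + D ^ 2) :
    (1 - u) * B ≤ (1 - u / 2) * E ^ 2 + 2 / u * D ^ 2 := by
  have hED : 0 ≤ (u / 2) * E ^ 2 + 2 / u * D ^ 2 - 2 * (E * D) := by
    have h : (u / 2) * E ^ 2 + 2 / u * D ^ 2 - 2 * (E * D)
        = (u * E - 2 * D) ^ 2 / (2 * u) := by field_simp; ring
    rw [h]; positivity
  have hKu : u * (2 / u) = 2 := by field_simp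
  calc (1 - u) * B ≤ (1 - u) * (E ^ 2 + 2 * (E * D) + D ^ 2) :=
        mul_le_mul_of_nonneg_left hB (by linarith)
    _ ≤ (1 - u) * ((1 + u / 2) * E ^ 2 + (1 + 2 / u) * D ^ 2) :=
        mul_le_mul_of_nonneg_left (by nlinarith) (by linarith)
    _ ≤ (1 - u / 2) * E ^ 2 + 2 / u * D ^ 2 := by
        nlinarith [mul_nonneg (mul_nonneg hu0.le hu0.le) (sq_nonneg E), sq_nonneg D,
          mul_nonneg hu0.le (sq_nonneg D), sq_nonneg E]

lemma sgd_sum_shift (q : ℝ) (a : ℕ → ℝ) (t : ℕ) :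
    q * ∑ ℓ ∈ Finset.range (t + 1), q ^ (t - ℓ) * a ℓ + a (t + 1)
      = ∑ ℓ ∈ Finset.range (t + 1 + 1), q ^ (t + 1 - ℓ) * a ℓ := by
  rw [Finset.sum_range_succ (f := fun ℓ => q ^ (t + 1 - ℓ) * a ℓ) (n := t + 1),
    Finset.mul_sum]
  congr 1
  · refine Finset.sum_congr rfl fun ℓ hℓ => ?_
    have hℓt : ℓ ≤ t := by simpa [Nat.lt_succ_iff] using Finset.mem_range.mp hℓ
    have h : t + 1 - ℓ = (t - ℓ) + 1 := by omega
    rw [h, pow_succ]; ring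
  · simp

set_option maxHeartbeats 800000 in
lemma sgd_step (d : ℕ) (μ L : ℝ) (hμ : 0 < μ) (hL : 0 < L)
    (m : ℕ → EuclideanSpace ℝ (Fin d) → EuclideanSpace ℝ (Fin d))
    (ξ : ℕ → EuclideanSpace ℝ (Fin d) → EuclideanSpace ℝ (Fin d))
    (θ θstar : ℕ → EuclideanSpace ℝ (Fin d))
    (hmono : ∀ t x y, μ * ‖x - y‖ ^ 2 ≤ ⟪m (t + 1) x - m (t + 1) y, x - y⟫_ℝ)
    (hlip : ∀ t x y, ‖m (t + 1) x - m (t + 1) y‖ ≤ L * ‖x - y‖)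
    (hzero : ∀ t, m (t + 1) (θstar (t + 1)) = 0)
    (γ : ℝ) (hγ0 : 0 < γ) (hγ : γ ≤ min (μ / L ^ 2) (1 / L))
    (hupd : ∀ t, θ (t + 1) = θ t - γ • m (t + 1) (θ t) - γ • ξ (t + 1) (θ t))
    (hμL : μ ≤ L) (t : ℕ) :
    ‖θ (t + 1) - θstar (t + 1)‖ ^ 2 ≤
      (1 - γ * μ / 2) * ‖θ t - θstar t‖ ^ 2
      + 2 / (γ * μ) * ‖θstar t - θstar (t + 1)‖ ^ 2
      + γ ^ 2 * ‖ξ (t + 1) (θ t)‖ ^ 2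
      + (-2 * γ) * ⟪θ t - θstar (t + 1) - γ • m (t + 1) (θ t), ξ (t + 1) (θ t)⟫_ℝ := by
  have hγL2 : γ * L ^ 2 ≤ μ := by
    have := (le_min_iff.mp hγ).1
    rw [le_div_iff₀ (by positivity)] at this; linarith
  have hu1 : γ * μ ≤ 1 := by
    have h2 : γ ≤ 1 / L := (le_min_iff.mp hγ).2
    have : γ * L ≤ 1 := by rw [le_div_iff₀ hL] at h2; linarith
    nlinarith
  have hu0 : 0 < γ * μ := by positivity
  set b := θ t - θstar (t + 1) with hb
  set g := m (t + 1) (θ t) with hgdef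
  set n := ξ (t + 1) (θ t) with hn
  have hθ : θ (t + 1) - θstar (t + 1) = (b - γ • g) - γ • n := by
    rw [hupd t, hb, hgdef, hn]; abel
  have expand1 : ‖θ (t + 1) - θstar (t + 1)‖ ^ 2
      = ‖b - γ • g‖ ^ 2 + γ ^ 2 * ‖n‖ ^ 2
        + (-2 * γ) * ⟪b - γ • g, n⟫_ℝ := by
    rw [hθ, norm_sub_sq_real, real_inner_smul_right, norm_smul, mul_pow, Real.norm_eq_abs,
      sq_abs]
    ring
  have hg : g = m (t + 1) (θ t) - m (t + 1) (θstar (t + 1)) := by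
    rw [hzero t, hgdef, sub_zero]
  have hmono' : μ * ‖b‖ ^ 2 ≤ ⟪g, b⟫_ℝ := by rw [hg, hb]; exact hmono t _ _
  have hlip' : ‖g‖ ≤ L * ‖b‖ := by rw [hg, hb]; exact hlip t _ _
  have expand2 : ‖b - γ • g‖ ^ 2 = ‖b‖ ^ 2 - 2 * γ * ⟪g, b⟫_ℝ + γ ^ 2 * ‖g‖ ^ 2 := by
    rw [norm_sub_sq_real, real_inner_smul_right, norm_smul, mul_pow, Real.norm_eq_abs,
      sq_abs, real_inner_comm]
    ring
  have hgsq : ‖g‖ ^ 2 ≤ L ^ 2 * ‖b‖ ^ 2 := by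
    nlinarith [norm_nonneg b, norm_nonneg g, hlip', mul_nonneg hL.le (norm_nonneg b)]
  have hcontr : ‖b - γ • g‖ ^ 2 ≤ (1 - γ * μ) * ‖b‖ ^ 2 := by
    rw [expand2]
    have h1 : γ ^ 2 * ‖g‖ ^ 2 ≤ γ ^ 2 * (L ^ 2 * ‖b‖ ^ 2) :=
      mul_le_mul_of_nonneg_left hgsq (sq_nonneg γ)
    have h2 : γ * (μ * ‖b‖ ^ 2) ≤ γ * ⟪g, b⟫_ℝ :=
      mul_le_mul_of_nonneg_left hmono' hγ0.le
    have h3 : γ ^ 2 * (L ^ 2 * ‖b‖ ^ 2) ≤ γ * μ * ‖b‖ ^ 2 := by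
      have : γ * (γ * L ^ 2) ≤ γ * μ := mul_le_mul_of_nonneg_left hγL2 hγ0.le
      nlinarith [sq_nonneg ‖b‖]
    linarith
  have hbsplit : b = (θ t - θstar t) + (θstar t - θstar (t + 1)) := by rw [hb]; abel
  have hbsq : ‖b‖ ^ 2 ≤ ‖θ t - θstar t‖ ^ 2
      + 2 * (‖θ t - θstar t‖ * ‖θstar t - θstar (t + 1)‖) + ‖θstar t - θstar (t + 1)‖ ^ 2 := by
    rw [hbsplit, norm_add_sq_real]
    have := real_inner_le_norm (θ t - θstar t) (θstar t - θstar (t + 1))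
    linarith
  have hfin := sgd_real_young (γ * μ) (‖b‖ ^ 2) ‖θ t - θstar t‖ ‖θstar t - θstar (t + 1)‖
    hu0 hu1 hbsq
  have hchain : ‖b - γ • g‖ ^ 2 ≤ (1 - γ * μ / 2) * ‖θ t - θstar t‖ ^ 2
      + 2 / (γ * μ) * ‖θstar t - θstar (t + 1)‖ ^ 2 := le_trans hcontr hfin
  rw [expand1]
  linarith

/-- Unrolled (pathwise) final-iterate tracking error bound for nonstationary SGD
with constant stepsize. -/
theorem sgd_unrolled_tracking_error
    (d : ℕ) (hd : 1 ≤ d) (μ L : ℝ) (hμ : 0 < μ) (hL : 0 < L)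
    (m : ℕ → EuclideanSpace ℝ (Fin d) → EuclideanSpace ℝ (Fin d))
    (ξ : ℕ → EuclideanSpace ℝ (Fin d) → EuclideanSpace ℝ (Fin d))
    (θ θstar : ℕ → EuclideanSpace ℝ (Fin d))
    (hmono : ∀ t x y, μ * ‖x - y‖ ^ 2 ≤ ⟪m (t + 1) x - m (t + 1) y, x - y⟫_ℝ)
    (hlip : ∀ t x y, ‖m (t + 1) x - m (t + 1) y‖ ≤ L * ‖x - y‖)
    (hzero : ∀ t, m (t + 1) (θstar (t + 1)) = 0)
    (γ : ℝ) (hγ0 : 0 < γ) (hγ : γ ≤ min (μ / L ^ 2) (1 / L))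
    (hupd : ∀ t, θ (t + 1) = θ t - γ • m (t + 1) (θ t) - γ • ξ (t + 1) (θ t)) :
    ∀ t : ℕ,
      ‖θ (t + 1) - θstar (t + 1)‖ ^ 2 ≤
        (1 - γ * μ / 2) ^ (t + 1) * ‖θ 0 - θstar 0‖ ^ 2
        + 2 / (γ * μ) * ∑ ℓ ∈ Finset.range (t + 1),
            (1 - γ * μ / 2) ^ (t - ℓ) * ‖θstar ℓ - θstar (ℓ + 1)‖ ^ 2
        + γ ^ 2 * ∑ ℓ ∈ Finset.range (t + 1),
            (1 - γ * μ / 2) ^ (t - ℓ) * ‖ξ (ℓ + 1) (θ ℓ)‖ ^ 2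
        + ∑ ℓ ∈ Finset.range (t + 1),
            (1 - γ * μ / 2) ^ (t - ℓ)
              * ((-2 * γ) * ⟪θ ℓ - θstar (ℓ + 1) - γ • m (ℓ + 1) (θ ℓ), ξ (ℓ + 1) (θ ℓ)⟫_ℝ) := by
  have hμL : μ ≤ L := by
    set x : EuclideanSpace ℝ (Fin d) := EuclideanSpace.single ⟨0, hd⟩ (1 : ℝ) with hxdef
    have hx : ‖x‖ = 1 := by simp [hxdef]
    have h1 := hmono 0 x 0
    have h2 := hlip 0 x 0
    have h3 := real_inner_le_norm (m 1 x - m 1 0) (x - 0)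
    rw [sub_zero] at h1 h2 h3
    rw [hx] at h1 h2 h3
    nlinarith
  have step := sgd_step d μ L hμ hL m ξ θ θstar hmono hlip hzero γ hγ0 hγ hupd hμL
  have hu1 : γ * μ ≤ 1 := by
    have h2 : γ ≤ 1 / L := (le_min_iff.mp hγ).2
    have : γ * L ≤ 1 := by rw [le_div_iff₀ hL] at h2; linarith
    nlinarith
  have hq0 : 0 ≤ 1 - γ * μ / 2 := by linarith
  intro t
  induction t with
  | zero => simpa using step 0
  | succ t ih =>
    have h := step (t + 1)
    have h2 : (1 - γ * μ / 2) * ‖θ (t + 1) - θstar (t + 1)‖ ^ 2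
        ≤ (1 - γ * μ / 2) *
          ((1 - γ * μ / 2) ^ (t + 1) * ‖θ 0 - θstar 0‖ ^ 2
          + 2 / (γ * μ) * ∑ ℓ ∈ Finset.range (t + 1),
              (1 - γ * μ / 2) ^ (t - ℓ) * ‖θstar ℓ - θstar (ℓ + 1)‖ ^ 2
          + γ ^ 2 * ∑ ℓ ∈ Finset.range (t + 1),
              (1 - γ * μ / 2) ^ (t - ℓ) * ‖ξ (ℓ + 1) (θ ℓ)‖ ^ 2
          + ∑ ℓ ∈ Finset.range (t + 1),
              (1 - γ * μ / 2) ^ (t - ℓ)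
                * ((-2 * γ) * ⟪θ ℓ - θstar (ℓ + 1) - γ • m (ℓ + 1) (θ ℓ), ξ (ℓ + 1) (θ ℓ)⟫_ℝ)) :=
      mul_le_mul_of_nonneg_left ih hq0
    have e1 := sgd_sum_shift (1 - γ * μ / 2) (fun ℓ => ‖θstar ℓ - θstar (ℓ + 1)‖ ^ 2) t
    have e2 := sgd_sum_shift (1 - γ * μ / 2) (fun ℓ => ‖ξ (ℓ + 1) (θ ℓ)‖ ^ 2) t
    have e3 := sgd_sum_shift (1 - γ * μ / 2)
      (fun ℓ => (-2 * γ) * ⟪θ ℓ - θstar (ℓ + 1) - γ • m (ℓ + 1) (θ ℓ), ξ (ℓ + 1) (θ ℓ)⟫_ℝ) t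
    rw [← e1, ← e2, ← e3, pow_succ (1 - γ * μ / 2) (t + 1)]
    have h3 : (1 - γ * μ / 2) * ‖θ (t + 1) - θstar (t + 1)‖ ^ 2
        ≤ (1 - γ * μ / 2) ^ (t + 1) * (1 - γ * μ / 2) * ‖θ 0 - θstar 0‖ ^ 2
        + 2 / (γ * μ) * ((1 - γ * μ / 2) * ∑ ℓ ∈ Finset.range (t + 1),
            (1 - γ * μ / 2) ^ (t - ℓ) * ‖θstar ℓ - θstar (ℓ + 1)‖ ^ 2)
        + γ ^ 2 * ((1 - γ * μ / 2) * ∑ ℓ ∈ Finset.range (t + 1),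
            (1 - γ * μ / 2) ^ (t - ℓ) * ‖ξ (ℓ + 1) (θ ℓ)‖ ^ 2)
        + (1 - γ * μ / 2) * ∑ ℓ ∈ Finset.range (t + 1),
            (1 - γ * μ / 2) ^ (t - ℓ)
              * ((-2 * γ) * ⟪θ ℓ - θstar (ℓ + 1) - γ • m (ℓ + 1) (θ ℓ), ξ (ℓ + 1) (θ ℓ)⟫_ℝ) :=
      le_of_le_of_eq h2 (by ring)
    linarith [h, h3]
end

section
/- Let (Ω, 𝓕, (𝓕_t)_{t≥0}, ℙ) be a filtered probability space. For each t ≥ 0 let m_{t+1} : ℝ^d → ℝ^d be such that m_{t+1}(θ) is 𝓕_t-measurable for each θ, satisfying ⟨m_{t+1}(x) − m_{t+1}(y), x − y⟩ ≥ μ‖x − y‖² and ‖m_{t+1}(x) − m_{t+1}(y)‖ ≤ L‖x − y‖ for all x, y. Let θ⋆_{t+1} be 𝓕_t-measurable with m_{t+1}(θ⋆_{t+1}) = 0 a.s., let the iterates θ_t be 𝓕_t-measurable with θ_{t+1} = θ_t − γ m_{t+1}(θ_t) − γ ξ_{t+1}(θ_t), where ξ_{t+1}(θ_t) is 𝓕_{t+1}-measurable,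 square-integrable, and 𝔼[ξ_{t+1}(θ_t) | 𝓕_t] = 0 a.s. Assume there exist Δ, σ > 0 with 𝔼[‖θ⋆_t − θ⋆_{t+1}‖²] ≤ Δ² and 𝔼[‖ξ_{t+1}(θ_t)‖²] ≤ σ² for all t, and that θ₀ is deterministic and all relevant quantities are integrable. If 0 < γ ≤ min{μ/L², 1/L}, then for all t ≥ 0: 𝔼‖θ_{t+1} − θ⋆_{t+1}‖² ≤ (1 − γμ/2)^{t+1} ‖θ₀ − θ⋆₀‖² + 4Δ²/(γ²μ²) + 2σ²γ/μ. -/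
open MeasureTheory
open scoped InnerProductSpace
open Filter
set_option maxHeartbeats 1000000

/-- Composition of a Carathéodory-type map (measurable in `ω`, Lipschitz in `x`)
with a strongly measurable map is strongly measurable. -/
lemma sgd_aux_comp_meas {Ω : Type*} {mΩ : MeasurableSpace Ω} {d : ℕ}
    (m : EuclideanSpace ℝ (Fin d) → Ω → EuclideanSpace ℝ (Fin d)) (L : ℝ) (hL : 0 ≤ L)
    (hm : ∀ x, StronglyMeasurable (m x))
    (hlip : ∀ ω x y, ‖m x ω - m y ω‖ ≤ L * ‖x - y‖)
    {θ : Ω → EuclideanSpace ℝ (Fin d)} (hθ : StronglyMeasurable θ) :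
    StronglyMeasurable fun ω => m (θ ω) ω := by
  have hcont : ∀ ω, Continuous fun x => m x ω := by
    intro ω
    refine (LipschitzWith.of_dist_le_mul (K := ⟨L, hL⟩) fun x y => ?_).continuous
    rw [dist_eq_norm, dist_eq_norm]
    exact hlip ω x y
  have hsm : ∀ k, StronglyMeasurable fun ω => m (hθ.approx k ω) ω := by
    intro k
    have heq : (fun ω => m (hθ.approx k ω) ω) =
        fun ω => ∑ c ∈ (hθ.approx k).range,
          Set.indicator ((hθ.approx k) ⁻¹' {c}) (m c) ω := by
      funext ω
      rw [Finset.sum_eq_single (hθ.approx k ω)]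
      · rw [Set.indicator_of_mem (by simp)]
      · intro c _ hc
        exact Set.indicator_of_notMem (by simp [Ne.symm hc]) _
      · intro h
        exact absurd (SimpleFunc.mem_range_self _ ω) h
    rw [heq]
    exact Finset.stronglyMeasurable_fun_sum _ fun c _ =>
      (hm c).indicator ((hθ.approx k).measurableSet_preimage _)
  refine stronglyMeasurable_of_tendsto atTop hsm ?_
  rw [tendsto_pi_nhds]
  intro ω
  exact ((hcont ω).tendsto _).comp (hθ.tendsto_approx ω)

/-- Product of two real `L²` functions is integrable. -/
lemma sgd_aux_int_mul {Ω : Type*} {m0 : MeasurableSpace Ω} {P : Measure Ω}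
    {f g : Ω → ℝ} (hf : MemLp f 2 P) (hg : MemLp g 2 P) :
    Integrable (fun ω => f ω * g ω) P := by
  have h := L2.integrable_inner (𝕜 := ℝ) (hf.toLp f) (hg.toLp g)
  refine h.congr ?_
  filter_upwards [hf.coeFn_toLp, hg.coeFn_toLp] with ω h1 h2
  simp [h1, h2, RCLike.inner_apply, conj_trivial]
  exact mul_comm _ _

/-- Orthogonality of a sub-σ-algebra measurable `L²` function against a
martingale-difference-type vector. -/
lemma sgd_aux_inner_zero {Ω : Type*} {mF m0 : MeasurableSpace Ω} (P : Measure Ω)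
    [IsProbabilityMeasure P] (hle : mF ≤ m0) {d : ℕ}
    {g ξ : Ω → EuclideanSpace ℝ (Fin d)}
    (hg : StronglyMeasurable[mF] g) (hgL2 : MemLp g 2 P) (hξL2 : MemLp ξ 2 P)
    (hmds : P[ξ|mF] =ᵐ[P] fun _ => 0) :
    ∫ ω, ⟪g ω, ξ ω⟫_ℝ ∂P = 0 := by
  have hξ_int : Integrable ξ P := hξL2.integrable one_le_two
  have hsum : (fun ω => ⟪g ω, ξ ω⟫_ℝ) = fun ω => ∑ i, (g ω i) * (ξ ω i) := by
    funext ω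
    simp [PiLp.inner_apply, RCLike.inner_apply, conj_trivial]
    exact Finset.sum_congr rfl fun _ _ => mul_comm _ _
  have hgi : ∀ i, StronglyMeasurable[mF] fun ω => g ω i := by
    intro i
    have := (EuclideanSpace.proj (𝕜 := ℝ) i).continuous.comp_stronglyMeasurable hg
    simpa [Function.comp] using this
  have hgiL2 : ∀ i, MemLp (fun ω => g ω i) 2 P := by
    intro i
    have := (EuclideanSpace.proj (𝕜 := ℝ) i).comp_memLp' hgL2
    simpa [Function.comp_def] using this
  have hξiL2 : ∀ i, MemLp (fun ω => ξ ω i) 2 P := by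
    intro i
    have := (EuclideanSpace.proj (𝕜 := ℝ) i).comp_memLp' hξL2
    simpa [Function.comp_def] using this
  have hmul : ∀ i, Integrable (fun ω => g ω i * ξ ω i) P :=
    fun i => sgd_aux_int_mul (hgiL2 i) (hξiL2 i)
  rw [hsum, integral_finset_sum _ fun i _ => hmul i]
  refine Finset.sum_eq_zero fun i _ => ?_
  have hξi_int : Integrable (fun ω => ξ ω i) P := (hξiL2 i).integrable one_le_two
  have hcond : P[fun ω => ξ ω i|mF] =ᵐ[P] fun _ => 0 := by
    refine (ae_eq_condExp_of_forall_setIntegral_eq hle hξi_int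
      (fun s _ _ => (integrable_zero _ _ _).integrableOn) (fun s hs hμs => ?_)
      ((stronglyMeasurable_const (β := ℝ) (α := Ω)).aestronglyMeasurable (m := mF))).symm
    have h1 : ∫ ω in s, ξ ω ∂P = 0 := by
      rw [← setIntegral_condExp hle hξ_int hs]
      calc ∫ ω in s, (P[ξ|mF]) ω ∂P
          = ∫ ω in s, (0 : EuclideanSpace ℝ (Fin d)) ∂P :=
            integral_congr_ae (ae_restrict_of_ae hmds)
        _ = 0 := integral_zero _ _
    have h2 : ∫ ω in s, ξ ω i ∂P
        = EuclideanSpace.proj (𝕜 := ℝ) i (∫ ω in s, ξ ω ∂P) := by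
      rw [← (EuclideanSpace.proj (𝕜 := ℝ) i).integral_comp_comm hξ_int.integrableOn]
      simp
    simp [h2, h1]
  have hpull : P[fun ω => g ω i * ξ ω i|mF]
      =ᵐ[P] fun ω => g ω i * (P[fun ω => ξ ω i|mF]) ω := by
    have := condExp_mul_of_stronglyMeasurable_left (hgi i) ?_ hξi_int
    · exact this
    · exact hmul i
  have hzero : P[fun ω => g ω i * ξ ω i|mF] =ᵐ[P] fun _ => (0 : ℝ) := by
    refine hpull.trans ?_
    filter_upwards [hcond] with ω hω
    simp [hω]
  rw [← integral_condExp hle (f := fun ω => g ω i * ξ ω i), integral_congr_ae hzero, integral_zero]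
/-- Tracking error bound in expectation for nonstationary SGD: exponentially decaying
transient plus irreducible drift and noise floors. Here `m t`, `ξ t`, `θstar (t+1)`
play the roles of `m_{t+1}`, `ξ_{t+1}(θ_t)`, `θ⋆_{t+1}` in the paper. -/
theorem sgd_tracking_error_expectation
    (d : ℕ) (hd : 1 ≤ d) (μ L Δ σ : ℝ)
    (hμ : 0 < μ) (hL : 0 < L) (hΔ : 0 < Δ) (hσ : 0 < σ)
    {Ω : Type*} {m0 : MeasurableSpace Ω} (P : Measure Ω) [IsProbabilityMeasure P]
    (ℱ : Filtration ℕ m0)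
    (m : ℕ → EuclideanSpace ℝ (Fin d) → Ω → EuclideanSpace ℝ (Fin d))
    (θ θstar ξ : ℕ → Ω → EuclideanSpace ℝ (Fin d))
    (θ0 θstar0 : EuclideanSpace ℝ (Fin d))
    (hθ0 : θ 0 = fun _ => θ0) (hθstar0 : θstar 0 = fun _ => θstar0)
    (hm_meas : ∀ t x, StronglyMeasurable[ℱ t] (m t x))
    (hmono : ∀ t ω x y, μ * ‖x - y‖ ^ 2 ≤ ⟪m t x ω - m t y ω, x - y⟫_ℝ)
    (hlip : ∀ t ω x y, ‖m t x ω - m t y ω‖ ≤ L * ‖x - y‖)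
    (hθstar_meas : ∀ t, StronglyMeasurable[ℱ t] (θstar (t + 1)))
    (hzero : ∀ t, ∀ᵐ ω ∂P, m t (θstar (t + 1) ω) ω = 0)
    (hadapted : ∀ t, StronglyMeasurable[ℱ t] (θ t))
    (γ : ℝ) (hγ0 : 0 < γ) (hγ : γ ≤ min (μ / L ^ 2) (1 / L))
    (hupd : ∀ t ω, θ (t + 1) ω = θ t ω - γ • m t (θ t ω) ω - γ • ξ t ω)
    (hξ_meas : ∀ t, StronglyMeasurable[ℱ (t + 1)] (ξ t))
    (hξ_L2 : ∀ t, MemLp (ξ t) 2 P)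
    (hξ_mds : ∀ t, P[ξ t | ℱ t] =ᵐ[P] fun _ => 0)
    (hdrift : ∀ t, ∫ ω, ‖θstar t ω - θstar (t + 1) ω‖ ^ 2 ∂P ≤ Δ ^ 2)
    (hnoise : ∀ t, ∫ ω, ‖ξ t ω‖ ^ 2 ∂P ≤ σ ^ 2)
    (hint_err : ∀ t, Integrable (fun ω => ‖θ t ω - θstar t ω‖ ^ 2) P)
    (hint_drift : ∀ t, Integrable (fun ω => ‖θstar t ω - θstar (t + 1) ω‖ ^ 2) P)
    (hint_inc : ∀ t, Integrable
      (fun ω => ⟪θ t ω - θstar (t + 1) ω - γ • m t (θ t ω) ω, ξ t ω⟫_ℝ) P) :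
    ∀ t : ℕ,
      ∫ ω, ‖θ (t + 1) ω - θstar (t + 1) ω‖ ^ 2 ∂P ≤
        (1 - γ * μ / 2) ^ (t + 1) * ‖θ0 - θstar0‖ ^ 2
          + 4 * Δ ^ 2 / (γ ^ 2 * μ ^ 2) + 2 * σ ^ 2 * γ / μ := by
  have hleF : ∀ s : ℕ, (ℱ s : MeasurableSpace Ω) ≤ m0 := fun s => ℱ.le s
  have hL2pos : (0 : ℝ) < L ^ 2 := by positivity
  have hγL2 : γ * L ^ 2 ≤ μ :=
    (le_div_iff₀ hL2pos).mp (le_trans hγ (min_le_left _ _))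
  have hγL : γ ≤ 1 / L := le_trans hγ (min_le_right _ _)
  have hΩ : Nonempty Ω := by
    by_contra h
    rw [not_nonempty_iff] at h
    have h1 : P Set.univ = 1 := measure_univ
    rw [Set.univ_eq_empty_iff.mpr h, measure_empty] at h1
    exact zero_ne_one h1
  have hμL : μ ≤ L := by
    obtain ⟨ω⟩ := hΩ
    have hi : 0 < d := hd
    set x : EuclideanSpace ℝ (Fin d) := EuclideanSpace.single ⟨0, hi⟩ (1 : ℝ) with hxdef
    have hx : ‖x - 0‖ = 1 := by
      rw [sub_zero, hxdef, EuclideanSpace.norm_single]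
      norm_num
    have h1 := hmono 0 ω x 0
    have h2 := real_inner_le_norm (m 0 x ω - m 0 0 ω) (x - 0)
    have h3 := hlip 0 ω x 0
    rw [hx] at h1 h2 h3
    nlinarith [h1, h2, h3]
  have hγμpos : 0 < γ * μ := mul_pos hγ0 hμ
  have hγμ1 : γ * μ ≤ 1 := by
    calc γ * μ ≤ (1 / L) * L := mul_le_mul hγL hμL hμ.le (by positivity)
    _ = 1 := by field_simp
  have hVnonneg : ∀ s : ℕ, 0 ≤ ∫ ω, ‖θ s ω - θstar s ω‖ ^ 2 ∂P :=
    fun s => integral_nonneg fun ω => by positivity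
  -- the one-step recursion
  have key : ∀ s : ℕ,
      ∫ ω, ‖θ (s + 1) ω - θstar (s + 1) ω‖ ^ 2 ∂P ≤
        (1 - γ * μ / 2) * ∫ ω, ‖θ s ω - θstar s ω‖ ^ 2 ∂P
          + (2 * Δ ^ 2 / (γ * μ) + γ ^ 2 * σ ^ 2) := by
    intro s
    set g : Ω → EuclideanSpace ℝ (Fin d) :=
      fun ω => θ s ω - θstar (s + 1) ω - γ • m s (θ s ω) ω with hgdef
    set a : Ω → EuclideanSpace ℝ (Fin d) :=
      fun ω => θ s ω - θstar (s + 1) ω with hadef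
    have hmθ : StronglyMeasurable[ℱ s] fun ω => m s (θ s ω) ω :=
      sgd_aux_comp_meas (mΩ := ℱ s) (m s) L hL.le (hm_meas s) (hlip s) (hadapted s)
    have ha_meas : StronglyMeasurable[ℱ s] a := by
      rw [hadef]; exact (hadapted s).sub (hθstar_meas s)
    have hg_meas : StronglyMeasurable[ℱ s] g := by
      rw [hgdef]
      exact ((hadapted s).sub (hθstar_meas s)).sub (hmθ.const_smul γ)
    -- Young-type bound on ‖a‖²
    have hyoung : ∀ ω, ‖a ω‖ ^ 2 ≤
        (1 + γ * μ / 2) * ‖θ s ω - θstar s ω‖ ^ 2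
          + (1 + 2 / (γ * μ)) * ‖θstar s ω - θstar (s + 1) ω‖ ^ 2 := by
      intro ω
      have h1 : ‖a ω‖ ≤ ‖θ s ω - θstar s ω‖ + ‖θstar s ω - θstar (s + 1) ω‖ := by
        rw [hadef]
        calc ‖θ s ω - θstar (s + 1) ω‖
            = ‖(θ s ω - θstar s ω) + (θstar s ω - θstar (s + 1) ω)‖ := by
              congr 1; abel
          _ ≤ _ := norm_add_le _ _
      have h2 : ‖a ω‖ ^ 2 ≤
          (‖θ s ω - θstar s ω‖ + ‖θstar s ω - θstar (s + 1) ω‖) ^ 2 := by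
        have := norm_nonneg (a ω); nlinarith [norm_nonneg (θ s ω - θstar s ω),
          norm_nonneg (θstar s ω - θstar (s + 1) ω)]
      have heq : (γ * μ / 2) * ‖θ s ω - θstar s ω‖ ^ 2
            + (2 / (γ * μ)) * ‖θstar s ω - θstar (s + 1) ω‖ ^ 2
            - 2 * ‖θ s ω - θstar s ω‖ * ‖θstar s ω - θstar (s + 1) ω‖
          = ((γ * μ / 2) * ‖θ s ω - θstar s ω‖ - ‖θstar s ω - θstar (s + 1) ω‖) ^ 2
              * (2 / (γ * μ)) := by
        field_simp
        ring
      have h3 : (0 : ℝ) ≤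
          ((γ * μ / 2) * ‖θ s ω - θstar s ω‖ - ‖θstar s ω - θstar (s + 1) ω‖) ^ 2
            * (2 / (γ * μ)) := by positivity
      nlinarith [h2, heq, h3]
    have hasq_int : Integrable (fun ω => ‖a ω‖ ^ 2) P := by
      refine Integrable.mono'
        (((hint_err s).const_mul (1 + γ * μ / 2)).add
          ((hint_drift s).const_mul (1 + 2 / (γ * μ)))) ?_ ?_
      · exact (((ha_meas.mono (hleF s)).norm.pow 2)).aestronglyMeasurable
      · refine Filter.Eventually.of_forall fun ω => ?_
        rw [Real.norm_eq_abs, abs_of_nonneg (by positivity)]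
        exact hyoung ω
    have hasq_bound : ∫ ω, ‖a ω‖ ^ 2 ∂P ≤
        (1 + γ * μ / 2) * (∫ ω, ‖θ s ω - θstar s ω‖ ^ 2 ∂P)
          + (1 + 2 / (γ * μ)) * Δ ^ 2 := by
      calc ∫ ω, ‖a ω‖ ^ 2 ∂P
          ≤ ∫ ω, ((1 + γ * μ / 2) * ‖θ s ω - θstar s ω‖ ^ 2
              + (1 + 2 / (γ * μ)) * ‖θstar s ω - θstar (s + 1) ω‖ ^ 2) ∂P :=
            integral_mono hasq_int
              (((hint_err s).const_mul _).add ((hint_drift s).const_mul _))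
              fun ω => hyoung ω
        _ = (1 + γ * μ / 2) * (∫ ω, ‖θ s ω - θstar s ω‖ ^ 2 ∂P)
              + (1 + 2 / (γ * μ)) * (∫ ω, ‖θstar s ω - θstar (s + 1) ω‖ ^ 2 ∂P) := by
            rw [integral_add ((hint_err s).const_mul _) ((hint_drift s).const_mul _),
              integral_const_mul, integral_const_mul]
        _ ≤ _ := by
            have h4 : (0 : ℝ) ≤ 1 + 2 / (γ * μ) := by positivity
            have := mul_le_mul_of_nonneg_left (hdrift s) h4
            linarith
    -- contraction bound
    have hcontr : ∀ᵐ ω ∂P, ‖g ω‖ ^ 2 ≤ (1 - γ * μ) * ‖a ω‖ ^ 2 := by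
      filter_upwards [hzero s] with ω hz
      have hD' : μ * ‖a ω‖ ^ 2 ≤
          ⟪m s (θ s ω) ω - m s (θstar (s + 1) ω) ω, a ω⟫_ℝ := by
        rw [hadef]; exact hmono s ω _ _
      have hDlip : ‖m s (θ s ω) ω - m s (θstar (s + 1) ω) ω‖ ≤ L * ‖a ω‖ := by
        rw [hadef]; exact hlip s ω _ _
      have hgrew : g ω = a ω - γ • (m s (θ s ω) ω - m s (θstar (s + 1) ω) ω) := by
        rw [hgdef, hadef]
        simp [hz]
      rw [hgrew, norm_sub_sq_real]
      have h1 : ⟪a ω, γ • (m s (θ s ω) ω - m s (θstar (s + 1) ω) ω)⟫_ℝ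
          = γ * ⟪m s (θ s ω) ω - m s (θstar (s + 1) ω) ω, a ω⟫_ℝ := by
        rw [real_inner_smul_right, real_inner_comm]
      have h2 : ‖γ • (m s (θ s ω) ω - m s (θstar (s + 1) ω) ω)‖ ^ 2
          = γ ^ 2 * ‖m s (θ s ω) ω - m s (θstar (s + 1) ω) ω‖ ^ 2 := by
        rw [norm_smul, mul_pow, Real.norm_eq_abs, sq_abs]
      rw [h1, h2]
      have h3 : ‖m s (θ s ω) ω - m s (θstar (s + 1) ω) ω‖ ^ 2 ≤ L ^ 2 * ‖a ω‖ ^ 2 := by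
        calc ‖m s (θ s ω) ω - m s (θstar (s + 1) ω) ω‖ ^ 2
            ≤ (L * ‖a ω‖) ^ 2 := pow_le_pow_left₀ (norm_nonneg _) hDlip 2
          _ = L ^ 2 * ‖a ω‖ ^ 2 := by ring
      have e1 : 2 * γ * (μ * ‖a ω‖ ^ 2) ≤
          2 * γ * ⟪m s (θ s ω) ω - m s (θstar (s + 1) ω) ω, a ω⟫_ℝ :=
        mul_le_mul_of_nonneg_left hD' (by positivity)
      have e2 : γ ^ 2 * ‖m s (θ s ω) ω - m s (θstar (s + 1) ω) ω‖ ^ 2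
          ≤ γ ^ 2 * (L ^ 2 * ‖a ω‖ ^ 2) := mul_le_mul_of_nonneg_left h3 (sq_nonneg γ)
      have e3 : γ ^ 2 * (L ^ 2 * ‖a ω‖ ^ 2) ≤ γ * μ * ‖a ω‖ ^ 2 := by
        have h5 : 0 ≤ γ * (μ - γ * L ^ 2) * ‖a ω‖ ^ 2 :=
          mul_nonneg (mul_nonneg hγ0.le (by linarith)) (sq_nonneg _)
        nlinarith [h5]
      linarith
    have hgsq_int : Integrable (fun ω => ‖g ω‖ ^ 2) P := by
      refine Integrable.mono' hasq_int
        (((hg_meas.mono (hleF s)).norm.pow 2)).aestronglyMeasurable ?_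
      filter_upwards [hcontr] with ω hω
      rw [Real.norm_eq_abs, abs_of_nonneg (by positivity)]
      nlinarith [sq_nonneg ‖a ω‖, hγμpos, hω]
    have hgsq_bound : ∫ ω, ‖g ω‖ ^ 2 ∂P ≤ (1 - γ * μ) * ∫ ω, ‖a ω‖ ^ 2 ∂P := by
      have h := integral_mono_ae hgsq_int (hasq_int.const_mul (1 - γ * μ)) hcontr
      rwa [integral_const_mul] at h
    have hξsq_int : Integrable (fun ω => ‖ξ s ω‖ ^ 2) P :=
      (memLp_two_iff_integrable_sq_norm (hξ_L2 s).aestronglyMeasurable).mp (hξ_L2 s)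
    have hgL2 : MemLp g 2 P :=
      (memLp_two_iff_integrable_sq_norm
        (hg_meas.mono (hleF s)).aestronglyMeasurable).mpr hgsq_int
    have hinner : ∫ ω, ⟪g ω, ξ s ω⟫_ℝ ∂P = 0 :=
      sgd_aux_inner_zero P (hleF s) hg_meas hgL2 (hξ_L2 s) (hξ_mds s)
    have hginner_int : Integrable (fun ω => ⟪g ω, ξ s ω⟫_ℝ) P := by
      have h := hint_inc s
      simp only [hgdef]
      exact h
    have hexp : ∀ ω, ‖θ (s + 1) ω - θstar (s + 1) ω‖ ^ 2
        = ‖g ω‖ ^ 2 - 2 * γ * ⟪g ω, ξ s ω⟫_ℝ + γ ^ 2 * ‖ξ s ω‖ ^ 2 := by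
      intro ω
      have h1 : θ (s + 1) ω - θstar (s + 1) ω = g ω - γ • ξ s ω := by
        rw [hupd s ω, hgdef]
        rw [sub_right_comm _ _ (θstar (s + 1) ω), sub_right_comm (θ s ω)]
      rw [h1, norm_sub_sq_real, real_inner_smul_right]
      have h2 : ‖γ • ξ s ω‖ ^ 2 = γ ^ 2 * ‖ξ s ω‖ ^ 2 := by
        rw [norm_smul, mul_pow, Real.norm_eq_abs, sq_abs]
      rw [h2]
      ring
    calc ∫ ω, ‖θ (s + 1) ω - θstar (s + 1) ω‖ ^ 2 ∂P
        = ∫ ω, (‖g ω‖ ^ 2 - 2 * γ * ⟪g ω, ξ s ω⟫_ℝ + γ ^ 2 * ‖ξ s ω‖ ^ 2) ∂P :=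
          integral_congr_ae (Filter.Eventually.of_forall hexp)
      _ = (∫ ω, ‖g ω‖ ^ 2 ∂P) - 2 * γ * (∫ ω, ⟪g ω, ξ s ω⟫_ℝ ∂P)
            + γ ^ 2 * (∫ ω, ‖ξ s ω‖ ^ 2 ∂P) := by
          have hf1 : Integrable (fun ω => ‖g ω‖ ^ 2 - 2 * γ * ⟪g ω, ξ s ω⟫_ℝ) P :=
            hgsq_int.sub (hginner_int.const_mul (2 * γ))
          rw [integral_add hf1 (hξsq_int.const_mul (γ ^ 2)),
            integral_sub hgsq_int (hginner_int.const_mul (2 * γ)),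
            integral_const_mul, integral_const_mul]
      _ = (∫ ω, ‖g ω‖ ^ 2 ∂P) + γ ^ 2 * (∫ ω, ‖ξ s ω‖ ^ 2 ∂P) := by
          rw [hinner]; ring
      _ ≤ (1 - γ * μ) * ((1 + γ * μ / 2) * (∫ ω, ‖θ s ω - θstar s ω‖ ^ 2 ∂P)
            + (1 + 2 / (γ * μ)) * Δ ^ 2) + γ ^ 2 * σ ^ 2 := by
          have h5 := mul_le_mul_of_nonneg_left hasq_bound
            (by linarith : (0 : ℝ) ≤ 1 - γ * μ)
          have h6 := mul_le_mul_of_nonneg_left (hnoise s) (sq_nonneg γ)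
          linarith
      _ ≤ (1 - γ * μ / 2) * (∫ ω, ‖θ s ω - θstar s ω‖ ^ 2 ∂P)
            + (2 * Δ ^ 2 / (γ * μ) + γ ^ 2 * σ ^ 2) := by
          have hV := hVnonneg s
          have e1 : (1 - γ * μ) * (1 + γ * μ / 2) ≤ 1 - γ * μ / 2 := by
            nlinarith [sq_nonneg (γ * μ)]
          have e2 : (1 - γ * μ) * (1 + 2 / (γ * μ)) ≤ 2 / (γ * μ) := by
            have heq : (1 - γ * μ) * (1 + 2 / (γ * μ)) = 2 / (γ * μ) - 1 - γ * μ := by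
              field_simp
              ring
            rw [heq]
            linarith
          have f1 := mul_le_mul_of_nonneg_right e1 hV
          have f2 := mul_le_mul_of_nonneg_right e2 (sq_nonneg Δ)
          have hrw : 2 / (γ * μ) * Δ ^ 2 = 2 * Δ ^ 2 / (γ * μ) := by ring
          nlinarith [f1, f2]
  -- induction
  have main : ∀ s : ℕ,
      ∫ ω, ‖θ s ω - θstar s ω‖ ^ 2 ∂P ≤
        (1 - γ * μ / 2) ^ s * ‖θ0 - θstar0‖ ^ 2
          + (4 * Δ ^ 2 / (γ ^ 2 * μ ^ 2) + 2 * σ ^ 2 * γ / μ) := by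
    intro s
    induction s with
    | zero =>
      have hK : (0 : ℝ) ≤ 4 * Δ ^ 2 / (γ ^ 2 * μ ^ 2) + 2 * σ ^ 2 * γ / μ := by positivity
      have h0 : ∫ ω, ‖θ 0 ω - θstar 0 ω‖ ^ 2 ∂P = ‖θ0 - θstar0‖ ^ 2 := by
        simp [hθ0, hθstar0]
      rw [h0, pow_zero, one_mul]
      linarith
    | succ n ih =>
      have hρ0 : (0 : ℝ) ≤ 1 - γ * μ / 2 := by linarith
      have hK : (1 - γ * μ / 2) * (4 * Δ ^ 2 / (γ ^ 2 * μ ^ 2) + 2 * σ ^ 2 * γ / μ)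
          + (2 * Δ ^ 2 / (γ * μ) + γ ^ 2 * σ ^ 2)
          = 4 * Δ ^ 2 / (γ ^ 2 * μ ^ 2) + 2 * σ ^ 2 * γ / μ := by
        field_simp
        ring
      calc ∫ ω, ‖θ (n + 1) ω - θstar (n + 1) ω‖ ^ 2 ∂P
          ≤ (1 - γ * μ / 2) * (∫ ω, ‖θ n ω - θstar n ω‖ ^ 2 ∂P)
              + (2 * Δ ^ 2 / (γ * μ) + γ ^ 2 * σ ^ 2) := key n
        _ ≤ (1 - γ * μ / 2) * ((1 - γ * μ / 2) ^ n * ‖θ0 - θstar0‖ ^ 2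
              + (4 * Δ ^ 2 / (γ ^ 2 * μ ^ 2) + 2 * σ ^ 2 * γ / μ))
              + (2 * Δ ^ 2 / (γ * μ) + γ ^ 2 * σ ^ 2) := by
            have := mul_le_mul_of_nonneg_left ih hρ0
            linarith
        _ = (1 - γ * μ / 2) ^ (n + 1) * ‖θ0 - θstar0‖ ^ 2
              + ((1 - γ * μ / 2) * (4 * Δ ^ 2 / (γ ^ 2 * μ ^ 2) + 2 * σ ^ 2 * γ / μ)
                + (2 * Δ ^ 2 / (γ * μ) + γ ^ 2 * σ ^ 2)) := by ring
        _ = (1 - γ * μ / 2) ^ (n + 1) * ‖θ0 - θstar0‖ ^ 2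
              + (4 * Δ ^ 2 / (γ ^ 2 * μ ^ 2) + 2 * σ ^ 2 * γ / μ) := by rw [hK]
  intro t
  have h := main (t + 1)
  linarith
end

section
/- In the setting of the expected tracking error bound for nonstationary SGD (filtered probability space; m_{t+1} uniformly μ-strongly monotone and L-Lipschitz with 𝓕_t-measurable values; 𝓕_t-measurable minimizers θ⋆_{t+1} with m_{t+1}(θ⋆_{t+1}) = 0; martingale-difference gradient noise with 𝔼[‖ξ_{t+1}(θ_t)‖²] ≤ σ²; drift with 𝔼[‖θ⋆_t − θ⋆_{t+1}‖²] ≤ Δ²), define 𝓔(γ) := σ²γ/μ + 4Δ²/(μ²γ²) for γ ∈ (0, 1/(2L)], and let γ⋆ be a minimizer of 𝓔 over (0, 1/(2L)], with 𝓔 := 𝓔(γ⋆). Assume in addition γ⋆ ≤ min{μ/L², 1/L}. If the algorithm is run with constant stepsize γ_t ≡ γ⋆, then for every t ≥ (2/(μγ⋆)) · log(‖θ₀ − θ⋆₀‖²/𝓔) one has 𝔼‖θ_{t+1} − θ⋆_{t+1}‖² ≤ 3𝓔. -/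
open MeasureTheory
open scoped InnerProductSpace


open MeasureTheory
open scoped InnerProductSpace

lemma aux_integrable_mul {Ω : Type*} {mΩ : MeasurableSpace Ω} {P : Measure Ω} {f g : Ω → ℝ}
    (hf : MemLp f 2 P) (hg : MemLp g 2 P) : Integrable (fun ω => f ω * g ω) P := by
  have h := L2.integrable_inner (𝕜 := ℝ) (hf.toLp f) (hg.toLp g)
  refine h.congr ?_
  filter_upwards [hf.coeFn_toLp, hg.coeFn_toLp] with ω h1 h2
  simp [h1, h2, RCLike.inner_apply]; ring

lemma aux_condexp_clm_zero {Ω : Type*} {m m0 : MeasurableSpace Ω} (hm : m ≤ m0)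
    (P : Measure Ω) [IsFiniteMeasure P]
    {E F : Type*} [NormedAddCommGroup E] [NormedSpace ℝ E] [CompleteSpace E]
    [NormedAddCommGroup F] [NormedSpace ℝ F] [CompleteSpace F]
    (T : E →L[ℝ] F) {f : Ω → E} (hf : Integrable f P)
    (h : P[f|m] =ᵐ[P] fun _ => 0) :
    P[fun ω => T (f ω)|m] =ᵐ[P] fun _ => 0 := by
  have hTf : Integrable (fun ω => T (f ω)) P := T.integrable_comp hf
  refine (ae_eq_condExp_of_forall_setIntegral_eq hm hTf ?_ ?_ ?_).symm
  · intro s _ _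
    exact (integrable_const (0 : F)).integrableOn
  · intro s hs _
    have h1 : ∫ x in s, f x ∂P = 0 := by
      rw [← setIntegral_condExp hm hf hs,
        setIntegral_congr_ae (hm s hs) (h.mono fun x hx _ => hx)]
      simp
    have h2 : ∫ x in s, T (f x) ∂P = T (∫ x in s, f x ∂P) :=
      T.integral_comp_comm hf.integrableOn
    rw [h2, h1, map_zero]
    simp
  · exact stronglyMeasurable_const.aestronglyMeasurable

lemma aux_integral_mul_eq_zero {Ω : Type*} {m m0 : MeasurableSpace Ω} (hm : m ≤ m0)
    (P : Measure Ω) [IsProbabilityMeasure P]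
    {f g : Ω → ℝ} (hfm : StronglyMeasurable[m] f)
    (hf : MemLp f 2 P) (hg : MemLp g 2 P)
    (hce : P[g|m] =ᵐ[P] fun _ => 0) :
    ∫ ω, f ω * g ω ∂P = 0 := by
  have hmul : Integrable (f * g) P := aux_integrable_mul hf hg
  have h := condExp_mul_of_stronglyMeasurable_left hfm hmul (hg.integrable one_le_two)
  have h2 : P[f * g|m] =ᵐ[P] fun _ => 0 := by
    refine h.trans ?_
    filter_upwards [hce] with ω hω
    simp [hω]
  calc ∫ ω, f ω * g ω ∂P = ∫ ω, (P[f * g|m]) ω ∂P := (integral_condExp hm).symm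
  _ = 0 := by rw [integral_congr_ae h2]; simp

lemma aux_comp_meas {Ω : Type*} {mΩ : MeasurableSpace Ω} {d : ℕ}
    {u : EuclideanSpace ℝ (Fin d) → Ω → EuclideanSpace ℝ (Fin d)} {L : ℝ}
    (hlip : ∀ ω x y, ‖u x ω - u y ω‖ ≤ L * ‖x - y‖)
    (hmeas : ∀ x, StronglyMeasurable (u x))
    {θ : Ω → EuclideanSpace ℝ (Fin d)} (hθ : StronglyMeasurable θ) :
    StronglyMeasurable (fun ω => u (θ ω) ω) := by
  have hcont : ∀ ω, Continuous fun x => u x ω := by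
    intro ω
    have : LipschitzWith (Real.toNNReal L) fun x => u x ω := by
      refine LipschitzWith.of_dist_le_mul fun x y => ?_
      rw [dist_eq_norm, dist_eq_norm]
      refine (hlip ω x y).trans ?_
      exact mul_le_mul_of_nonneg_right (Real.le_coe_toNNReal L) (norm_nonneg _)
    exact this.continuous
  have hunc : StronglyMeasurable (Function.uncurry u) :=
    stronglyMeasurable_uncurry_of_continuous_of_stronglyMeasurable hcont hmeas
  exact hunc.comp_measurable (hθ.measurable.prodMk measurable_id)
lemma aux_young {E : Type*} [NormedAddCommGroup E] [InnerProductSpace ℝ E]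
    (c : ℝ) (hc : 0 < c) (u v : E) :
    ‖u + v‖ ^ 2 ≤ (1 + c) * ‖u‖ ^ 2 + (1 + 1 / c) * ‖v‖ ^ 2 := by
  have h := real_inner_le_norm u v
  have hexp := norm_add_sq_real u v
  have key : 2 * ⟪u, v⟫_ℝ ≤ c * ‖u‖ ^ 2 + (1 / c) * ‖v‖ ^ 2 := by
    have h2 : (2 * ‖u‖ * ‖v‖ - c * ‖u‖ ^ 2) * c ≤ ‖v‖ ^ 2 := by
      nlinarith [sq_nonneg (c * ‖u‖ - ‖v‖)]
    have h3 : 2 * ‖u‖ * ‖v‖ - c * ‖u‖ ^ 2 ≤ ‖v‖ ^ 2 / c := (le_div_iff₀ hc).mpr h2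
    have h4 : (1 / c) * ‖v‖ ^ 2 = ‖v‖ ^ 2 / c := by ring
    linarith
  nlinarith [key, hexp]

set_option maxHeartbeats 2000000 in
lemma sgd_step_s3 {d : ℕ} {Ω : Type*} {m0 : MeasurableSpace Ω} (P : Measure Ω)
    [IsProbabilityMeasure P] {mF : MeasurableSpace Ω} (hm : mF ≤ m0)
    (μ L γ σ Δ : ℝ) (hμ : 0 < μ) (hL : 0 < L) (hγ : 0 < γ)
    (hγμ : γ * L ^ 2 ≤ μ) (hμγ : μ * γ ≤ 1 / 2) (hΔ : 0 ≤ Δ)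
    (mm : EuclideanSpace ℝ (Fin d) → Ω → EuclideanSpace ℝ (Fin d))
    (ϑ ϑ' w w' ξ : Ω → EuclideanSpace ℝ (Fin d))
    (hm_meas : ∀ x, StronglyMeasurable[mF] (mm x))
    (hmono : ∀ ω x y, μ * ‖x - y‖ ^ 2 ≤ ⟪mm x ω - mm y ω, x - y⟫_ℝ)
    (hlip : ∀ ω x y, ‖mm x ω - mm y ω‖ ≤ L * ‖x - y‖)
    (hw'_meas : StronglyMeasurable[mF] w')
    (hzero : ∀ᵐ ω ∂P, mm (w' ω) ω = 0)
    (hϑ_meas : StronglyMeasurable[mF] ϑ)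
    (hupd : ∀ ω, ϑ' ω = ϑ ω - γ • mm (ϑ ω) ω - γ • ξ ω)
    (hξ_L2 : MemLp ξ 2 P)
    (hξ_mds : P[ξ|mF] =ᵐ[P] fun _ => 0)
    (hdrift : ∫ ω, ‖w ω - w' ω‖ ^ 2 ∂P ≤ Δ ^ 2)
    (hσb : ∫ ω, ‖ξ ω‖ ^ 2 ∂P ≤ σ ^ 2)
    (herr : Integrable (fun ω => ‖ϑ ω - w ω‖ ^ 2) P)
    (herr' : Integrable (fun ω => ‖ϑ' ω - w' ω‖ ^ 2) P)
    (hw_meas : AEStronglyMeasurable[m0] w P)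
    (hdint : Integrable (fun ω => ‖w ω - w' ω‖ ^ 2) P)
    (hinc : Integrable (fun ω => ⟪ϑ ω - w' ω - γ • mm (ϑ ω) ω, ξ ω⟫_ℝ) P) :
    ∫ ω, ‖ϑ' ω - w' ω‖ ^ 2 ∂P ≤
      (1 - μ * γ / 2) * ∫ ω, ‖ϑ ω - w ω‖ ^ 2 ∂P + (γ ^ 2 * σ ^ 2 + 3 / (μ * γ) * Δ ^ 2) := by
  have hϑm : AEStronglyMeasurable[m0] ϑ P := (hϑ_meas.mono hm).aestronglyMeasurable
  have hw'm : AEStronglyMeasurable[m0] w' P := (hw'_meas.mono hm).aestronglyMeasurable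
  -- L² memberships
  have herr2 : MemLp (fun ω => ϑ ω - w ω) 2 P :=
    (memLp_two_iff_integrable_sq_norm (hϑm.sub hw_meas)).2 herr
  have hdrift2 : MemLp (fun ω => w ω - w' ω) 2 P :=
    (memLp_two_iff_integrable_sq_norm (hw_meas.sub hw'm)).2 hdint
  have hϑ'm : AEStronglyMeasurable[m0] ϑ' P := by
    have : ϑ' = fun ω => ϑ ω - γ • mm (ϑ ω) ω - γ • ξ ω := funext hupd
    rw [this]
    have hma : StronglyMeasurable[mF] (fun ω => mm (ϑ ω) ω) :=
      aux_comp_meas (fun ω x y => hlip ω x y) hm_meas hϑ_meas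
    exact ((hϑ_meas.mono hm).aestronglyMeasurable.sub
        ((hma.mono hm).aestronglyMeasurable.const_smul γ)).sub
      (((hξ_L2.aestronglyMeasurable)).const_smul γ)
  have herr2' : MemLp (fun ω => ϑ' ω - w' ω) 2 P :=
    (memLp_two_iff_integrable_sq_norm (hϑ'm.sub hw'm)).2 herr'
  have hx2 : MemLp (fun ω => ϑ ω - w' ω) 2 P := by
    have heq : (fun ω => ϑ ω - w' ω)
        = fun ω => (ϑ ω - w ω) + (w ω - w' ω) := by
      funext ω; abel
    rw [heq]; exact herr2.add hdrift2
  have hintx : Integrable (fun ω => ‖ϑ ω - w' ω‖ ^ 2) P :=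
    (memLp_two_iff_integrable_sq_norm hx2.aestronglyMeasurable).1 hx2
  -- the ℱ-measurable part of the increment
  set a : Ω → EuclideanSpace ℝ (Fin d) := fun ω => ϑ ω - w' ω - γ • mm (ϑ ω) ω with ha_def
  have ha_eq : a = fun ω => (ϑ' ω - w' ω) + γ • ξ ω := by
    funext ω; rw [ha_def]; simp only [hupd ω]; abel
  have ha2 : MemLp a 2 P := by
    rw [ha_eq]; exact herr2'.add (hξ_L2.const_smul γ)
  have hma : StronglyMeasurable[mF] (fun ω => mm (ϑ ω) ω) :=
    aux_comp_meas (fun ω x y => hlip ω x y) hm_meas hϑ_meas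
  have ham : StronglyMeasurable[mF] a :=
    (hϑ_meas.sub hw'_meas).sub (hma.const_smul γ)
  -- cross term vanishes
  have hterm : ∀ i : Fin d, ∫ ω, a ω i * ξ ω i ∂P = 0 := by
    intro i
    refine aux_integral_mul_eq_zero hm P
      ((EuclideanSpace.proj (𝕜 := ℝ) i).continuous.comp_stronglyMeasurable ham)
      ((EuclideanSpace.proj (𝕜 := ℝ) i).comp_memLp' ha2)
      ((EuclideanSpace.proj (𝕜 := ℝ) i).comp_memLp' hξ_L2) ?_
    exact aux_condexp_clm_zero hm P (EuclideanSpace.proj i)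
      (hξ_L2.integrable one_le_two) hξ_mds
  have hterm_int : ∀ i : Fin d, Integrable (fun ω => a ω i * ξ ω i) P := fun i =>
    aux_integrable_mul ((EuclideanSpace.proj (𝕜 := ℝ) i).comp_memLp' ha2)
      ((EuclideanSpace.proj (𝕜 := ℝ) i).comp_memLp' hξ_L2)
  have hcross : ∫ ω, ⟪a ω, ξ ω⟫_ℝ ∂P = 0 := by
    calc ∫ ω, ⟪a ω, ξ ω⟫_ℝ ∂P = ∫ ω, ∑ i, a ω i * ξ ω i ∂P := by
          refine integral_congr_ae (ae_of_all _ fun ω => ?_)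
          simp [PiLp.inner_apply, RCLike.inner_apply]
          exact Finset.sum_congr rfl fun _ _ => mul_comm _ _
      _ = ∑ i, ∫ ω, a ω i * ξ ω i ∂P := integral_finset_sum _ fun i _ => hterm_int i
      _ = 0 := by simp [hterm]
  -- pointwise expansion of the squared error
  have hid : ∀ ω, ‖ϑ' ω - w' ω‖ ^ 2
      = ‖a ω‖ ^ 2 - 2 * γ * ⟪a ω, ξ ω⟫_ℝ + γ ^ 2 * ‖ξ ω‖ ^ 2 := by
    intro ω
    have h1 : ϑ' ω - w' ω = a ω - γ • ξ ω := by
      rw [ha_def, hupd ω]; beta_reduce; abel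
    rw [h1, norm_sub_sq_real, real_inner_smul_right, norm_smul]
    simp only [Real.norm_eq_abs, mul_pow, sq_abs]
    ring
  have hint_a : Integrable (fun ω => ‖a ω‖ ^ 2) P :=
    (memLp_two_iff_integrable_sq_norm ha2.aestronglyMeasurable).1 ha2
  have hint_xi : Integrable (fun ω => ‖ξ ω‖ ^ 2) P :=
    (memLp_two_iff_integrable_sq_norm hξ_L2.aestronglyMeasurable).1 hξ_L2
  have hint_cross : Integrable (fun ω => ⟪a ω, ξ ω⟫_ℝ) P := hinc
  have hEq : ∫ ω, ‖ϑ' ω - w' ω‖ ^ 2 ∂P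
      = (∫ ω, ‖a ω‖ ^ 2 ∂P) + γ ^ 2 * ∫ ω, ‖ξ ω‖ ^ 2 ∂P := by
    have h0 : ∫ ω, ‖ϑ' ω - w' ω‖ ^ 2 ∂P
        = ∫ ω, (‖a ω‖ ^ 2 - 2 * γ * ⟪a ω, ξ ω⟫_ℝ + γ ^ 2 * ‖ξ ω‖ ^ 2) ∂P :=
      integral_congr_ae (ae_of_all _ hid)
    have hiA : Integrable (fun ω => ‖a ω‖ ^ 2 - 2 * γ * ⟪a ω, ξ ω⟫_ℝ) P :=
      hint_a.sub (hint_cross.const_mul (2 * γ))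
    have hiB : Integrable (fun ω => γ ^ 2 * ‖ξ ω‖ ^ 2) P := hint_xi.const_mul (γ ^ 2)
    have hiC : Integrable (fun ω => 2 * γ * ⟪a ω, ξ ω⟫_ℝ) P := hint_cross.const_mul (2 * γ)
    rw [h0, integral_add hiA hiB, integral_sub hint_a hiC,
      integral_const_mul, integral_const_mul, hcross]
    ring
  -- contraction bound
  have hae : ∀ᵐ ω ∂P, ‖a ω‖ ^ 2 ≤ (1 - μ * γ) * ‖ϑ ω - w' ω‖ ^ 2 := by
    filter_upwards [hzero] with ω hω
    have hmd : a ω = (ϑ ω - w' ω) - γ • (mm (ϑ ω) ω - mm (w' ω) ω) := by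
      rw [ha_def, hω]; simp
    have h1 := hmono ω (ϑ ω) (w' ω)
    have h2 := hlip ω (ϑ ω) (w' ω)
    have h2' : ‖mm (ϑ ω) ω - mm (w' ω) ω‖ ^ 2 ≤ L ^ 2 * ‖ϑ ω - w' ω‖ ^ 2 := by
      nlinarith [norm_nonneg (mm (ϑ ω) ω - mm (w' ω) ω), norm_nonneg (ϑ ω - w' ω)]
    rw [hmd, norm_sub_sq_real, real_inner_smul_right, norm_smul]
    simp only [Real.norm_eq_abs, mul_pow, sq_abs]
    have hcomm : ⟪ϑ ω - w' ω, mm (ϑ ω) ω - mm (w' ω) ω⟫_ℝ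
        = ⟪mm (ϑ ω) ω - mm (w' ω) ω, ϑ ω - w' ω⟫_ℝ := real_inner_comm _ _
    have e1 : 2 * γ * (μ * ‖ϑ ω - w' ω‖ ^ 2)
        ≤ 2 * γ * ⟪mm (ϑ ω) ω - mm (w' ω) ω, ϑ ω - w' ω⟫_ℝ := by
      apply mul_le_mul_of_nonneg_left h1; positivity
    have e2 : γ ^ 2 * ‖mm (ϑ ω) ω - mm (w' ω) ω‖ ^ 2
        ≤ γ ^ 2 * (L ^ 2 * ‖ϑ ω - w' ω‖ ^ 2) := by
      apply mul_le_mul_of_nonneg_left h2'; positivity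
    have e3 : γ * ‖ϑ ω - w' ω‖ ^ 2 * (γ * L ^ 2) ≤ γ * ‖ϑ ω - w' ω‖ ^ 2 * μ := by
      apply mul_le_mul_of_nonneg_left hγμ; positivity
    nlinarith [e1, e2, e3, hcomm]
  have hA : ∫ ω, ‖a ω‖ ^ 2 ∂P ≤ (1 - μ * γ) * ∫ ω, ‖ϑ ω - w' ω‖ ^ 2 ∂P := by
    have := integral_mono_ae hint_a (hintx.const_mul (1 - μ * γ)) hae
    rwa [integral_const_mul] at this
  -- drift decomposition
  have hρ : (0 : ℝ) < μ * γ / 2 := by positivity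
  have hB : ∫ ω, ‖ϑ ω - w' ω‖ ^ 2 ∂P
      ≤ (1 + μ * γ / 2) * (∫ ω, ‖ϑ ω - w ω‖ ^ 2 ∂P)
        + (1 + 1 / (μ * γ / 2)) * Δ ^ 2 := by
    have hpt : ∀ ω, ‖ϑ ω - w' ω‖ ^ 2
        ≤ (1 + μ * γ / 2) * ‖ϑ ω - w ω‖ ^ 2 + (1 + 1 / (μ * γ / 2)) * ‖w ω - w' ω‖ ^ 2 := by
      intro ω
      have := aux_young (μ * γ / 2) hρ (ϑ ω - w ω) (w ω - w' ω)
      rwa [sub_add_sub_cancel] at this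
    calc ∫ ω, ‖ϑ ω - w' ω‖ ^ 2 ∂P
        ≤ ∫ ω, ((1 + μ * γ / 2) * ‖ϑ ω - w ω‖ ^ 2
            + (1 + 1 / (μ * γ / 2)) * ‖w ω - w' ω‖ ^ 2) ∂P := by
          refine integral_mono hintx ?_ hpt
          exact (herr.const_mul _).add (hdint.const_mul _)
      _ = (1 + μ * γ / 2) * (∫ ω, ‖ϑ ω - w ω‖ ^ 2 ∂P)
            + (1 + 1 / (μ * γ / 2)) * ∫ ω, ‖w ω - w' ω‖ ^ 2 ∂P := by
          rw [integral_add (herr.const_mul _) (hdint.const_mul _),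
            integral_const_mul, integral_const_mul]
      _ ≤ _ := by
          have h1 : (0:ℝ) ≤ 1 + 1 / (μ * γ / 2) := by positivity
          have := mul_le_mul_of_nonneg_left hdrift h1
          linarith
  -- combine everything
  set e : ℝ := ∫ ω, ‖ϑ ω - w ω‖ ^ 2 ∂P with he_def
  have he_nonneg : 0 ≤ e := integral_nonneg fun ω => sq_nonneg _
  have hg : 0 < μ * γ := mul_pos hμ hγ
  have hco1 : (1 - μ * γ) * (1 + μ * γ / 2) ≤ 1 - μ * γ / 2 := by nlinarith
  have hco2 : (1 - μ * γ) * (1 + 1 / (μ * γ / 2)) ≤ 3 / (μ * γ) := by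
    have hinv : 1 / (μ * γ / 2) = 2 / (μ * γ) := one_div_div (μ * γ) 2
    rw [hinv]
    have h2 : (1 - μ * γ) * (1 + 2 / (μ * γ)) ≤ 1 + 2 / (μ * γ) := by
      have hpos : (0:ℝ) ≤ 1 + 2 / (μ * γ) := by positivity
      nlinarith
    have h3 : 1 + 2 / (μ * γ) ≤ 3 / (μ * γ) := by
      rw [show (3:ℝ) / (μ * γ) = 1 / (μ * γ) + 2 / (μ * γ) by ring]
      have : (1:ℝ) ≤ 1 / (μ * γ) := by
        rw [le_div_iff₀ hg]; linarith
      linarith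
    linarith
  have h1μγ : (0:ℝ) ≤ 1 - μ * γ := by linarith
  have hX_nonneg : 0 ≤ ∫ ω, ‖ϑ ω - w' ω‖ ^ 2 ∂P := integral_nonneg fun ω => sq_nonneg _
  have hAB : ∫ ω, ‖a ω‖ ^ 2 ∂P
      ≤ (1 - μ * γ) * ((1 + μ * γ / 2) * e + (1 + 1 / (μ * γ / 2)) * Δ ^ 2) :=
    hA.trans (mul_le_mul_of_nonneg_left hB h1μγ)
  have hξterm : γ ^ 2 * (∫ ω, ‖ξ ω‖ ^ 2 ∂P) ≤ γ ^ 2 * σ ^ 2 :=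
    mul_le_mul_of_nonneg_left hσb (by positivity)
  have hΔ2 : (0:ℝ) ≤ Δ ^ 2 := sq_nonneg _
  have hc1e : (1 - μ * γ) * ((1 + μ * γ / 2) * e) ≤ (1 - μ * γ / 2) * e := by
    rw [← mul_assoc]
    exact mul_le_mul_of_nonneg_right hco1 he_nonneg
  have hc2Δ : (1 - μ * γ) * ((1 + 1 / (μ * γ / 2)) * Δ ^ 2) ≤ 3 / (μ * γ) * Δ ^ 2 := by
    rw [← mul_assoc]
    exact mul_le_mul_of_nonneg_right hco2 hΔ2
  rw [hEq, he_def] at *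
  nlinarith [hAB, hξterm, hc1e, hc2Δ]


set_option maxHeartbeats 1000000 in
/-- Time to reach the asymptotic tracking error, in expectation, for nonstationary SGD
run with the stepsize `γ⋆` optimizing the steady-state error
`𝓔(γ) = σ²γ/μ + 4Δ²/(μ²γ²)` over `(0, 1/(2L)]`: after a burn-in of
`(2/(μγ⋆)) log(‖θ₀ − θ⋆₀‖²/𝓔)` iterations the expected squared tracking error
is at most `3𝓔`. -/
theorem sgd_time_to_track_expectation
    (d : ℕ) (hd : 1 ≤ d) (μ L Δ σ : ℝ)
    (hμ : 0 < μ) (hL : 0 < L) (hΔ : 0 < Δ) (hσ : 0 < σ)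
    {Ω : Type*} {m0 : MeasurableSpace Ω} (P : Measure Ω) [IsProbabilityMeasure P]
    (ℱ : Filtration ℕ m0)
    (m : ℕ → EuclideanSpace ℝ (Fin d) → Ω → EuclideanSpace ℝ (Fin d))
    (θ θstar ξ : ℕ → Ω → EuclideanSpace ℝ (Fin d))
    (θ0 θstar0 : EuclideanSpace ℝ (Fin d))
    (hθ0 : θ 0 = fun _ => θ0) (hθstar0 : θstar 0 = fun _ => θstar0)
    (hm_meas : ∀ t x, StronglyMeasurable[ℱ t] (m t x))
    (hmono : ∀ t ω x y, μ * ‖x - y‖ ^ 2 ≤ ⟪m t x ω - m t y ω, x - y⟫_ℝ)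
    (hlip : ∀ t ω x y, ‖m t x ω - m t y ω‖ ≤ L * ‖x - y‖)
    (hθstar_meas : ∀ t, StronglyMeasurable[ℱ t] (θstar (t + 1)))
    (hzero : ∀ t, ∀ᵐ ω ∂P, m t (θstar (t + 1) ω) ω = 0)
    (hadapted : ∀ t, StronglyMeasurable[ℱ t] (θ t))
    -- the optimized constant stepsize `γ⋆` and steady-state error `𝓔 = 𝓔(γ⋆)`
    (γstar E : ℝ)
    (hγstar_mem : γstar ∈ Set.Ioc (0 : ℝ) (1 / (2 * L)))
    (hE : E = σ ^ 2 * γstar / μ + 4 * Δ ^ 2 / (μ ^ 2 * γstar ^ 2))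
    (hmin : ∀ γ ∈ Set.Ioc (0 : ℝ) (1 / (2 * L)),
      E ≤ σ ^ 2 * γ / μ + 4 * Δ ^ 2 / (μ ^ 2 * γ ^ 2))
    (hγstar_le : γstar ≤ min (μ / L ^ 2) (1 / L))
    (hupd : ∀ t ω, θ (t + 1) ω = θ t ω - γstar • m t (θ t ω) ω - γstar • ξ t ω)
    (hξ_meas : ∀ t, StronglyMeasurable[ℱ (t + 1)] (ξ t))
    (hξ_L2 : ∀ t, MemLp (ξ t) 2 P)
    (hξ_mds : ∀ t, P[ξ t | ℱ t] =ᵐ[P] fun _ => 0)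
    (hdrift : ∀ t, ∫ ω, ‖θstar t ω - θstar (t + 1) ω‖ ^ 2 ∂P ≤ Δ ^ 2)
    (hnoise : ∀ t, ∫ ω, ‖ξ t ω‖ ^ 2 ∂P ≤ σ ^ 2)
    (hint_err : ∀ t, Integrable (fun ω => ‖θ t ω - θstar t ω‖ ^ 2) P)
    (hint_drift : ∀ t, Integrable (fun ω => ‖θstar t ω - θstar (t + 1) ω‖ ^ 2) P)
    (hint_inc : ∀ t, Integrable
      (fun ω => ⟪θ t ω - θstar (t + 1) ω - γstar • m t (θ t ω) ω, ξ t ω⟫_ℝ) P) :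
    ∀ t : ℕ,
      2 / (μ * γstar) * Real.log (‖θ0 - θstar0‖ ^ 2 / E) ≤ (t : ℝ) →
      ∫ ω, ‖θ (t + 1) ω - θstar (t + 1) ω‖ ^ 2 ∂P ≤ 3 * E := by
  intro t ht
  obtain ⟨hγpos, hγle⟩ := hγstar_mem
  have hγμL2 : γstar ≤ μ / L ^ 2 := hγstar_le.trans (min_le_left _ _)
  have hγL2μ : γstar * L ^ 2 ≤ μ := (le_div_iff₀ (by positivity)).mp hγμL2
  -- `μ ≤ L`
  have hΩ : Nonempty Ω := by
    by_contra h
    rw [not_nonempty_iff] at h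
    have h1 : P Set.univ = 1 := measure_univ
    rw [Set.univ_eq_empty_iff.mpr h] at h1
    simp at h1
  obtain ⟨ω0⟩ := hΩ
  have hμL : μ ≤ L := by
    set x : EuclideanSpace ℝ (Fin d) := EuclideanSpace.single ⟨0, hd⟩ (1 : ℝ) with hx
    have hxn : ‖x - 0‖ = 1 := by rw [sub_zero, hx, EuclideanSpace.norm_single]; norm_num
    have h1 := hmono 0 ω0 x 0
    have h2 : ⟪m 0 x ω0 - m 0 0 ω0, x - 0⟫_ℝ ≤ (L * ‖x - 0‖) * ‖x - 0‖ :=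
      (real_inner_le_norm _ _).trans
        (mul_le_mul_of_nonneg_right (hlip 0 ω0 x 0) (norm_nonneg _))
    rw [hxn] at h1 h2
    norm_num at h1 h2
    linarith
  have hμγ12 : μ * γstar ≤ 1 / 2 := by
    have hLγ : L * γstar ≤ 1 / 2 := by
      have h3 := mul_le_mul_of_nonneg_left hγle hL.le
      have hc : L * (1 / (2 * L)) = 1 / 2 := by field_simp
      linarith
    nlinarith [hγpos]
  have hEpos : 0 < E := by rw [hE]; positivity
  have hθstarm : ∀ s, AEStronglyMeasurable (θstar s) P := by
    intro s
    match s with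
    | 0 => rw [hθstar0]; exact aestronglyMeasurable_const
    | Nat.succ n => exact ((hθstar_meas n).mono (ℱ.le n)).aestronglyMeasurable
  have hstep : ∀ s, ∫ ω, ‖θ (s + 1) ω - θstar (s + 1) ω‖ ^ 2 ∂P
      ≤ (1 - μ * γstar / 2) * ∫ ω, ‖θ s ω - θstar s ω‖ ^ 2 ∂P
        + (γstar ^ 2 * σ ^ 2 + 3 / (μ * γstar) * Δ ^ 2) := fun s =>
    sgd_step_s3 P (ℱ.le s) μ L γstar σ Δ hμ hL hγpos hγL2μ hμγ12 hΔ.le (m s)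
      (θ s) (θ (s + 1)) (θstar s) (θstar (s + 1)) (ξ s)
      (hm_meas s) (hmono s) (hlip s) (hθstar_meas s) (hzero s) (hadapted s)
      (hupd s) (hξ_L2 s) (hξ_mds s) (hdrift s) (hnoise s)
      (hint_err s) (hint_err (s + 1)) (hθstarm s) (hint_drift s) (hint_inc s)
  set ρ := μ * γstar / 2 with hρdef
  have hρpos : 0 < ρ := by rw [hρdef]; positivity
  have hρne : ρ ≠ 0 := hρpos.ne'
  have hρle : ρ ≤ 1 / 4 := by rw [hρdef]; linarith
  set b := γstar ^ 2 * σ ^ 2 + 3 / (μ * γstar) * Δ ^ 2 with hbdef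
  have hbnn : 0 ≤ b := by rw [hbdef]; positivity
  have he0 : ∫ ω, ‖θ 0 ω - θstar 0 ω‖ ^ 2 ∂P = ‖θ0 - θstar0‖ ^ 2 := by
    rw [hθ0, hθstar0]; simp
  have he0nn : (0 : ℝ) ≤ ‖θ0 - θstar0‖ ^ 2 := by positivity
  have hbρnn : 0 ≤ b / ρ := by positivity
  have h1ρ : (0 : ℝ) ≤ 1 - ρ := by linarith
  have hiter : ∀ n, ∫ ω, ‖θ n ω - θstar n ω‖ ^ 2 ∂P
      ≤ (1 - ρ) ^ n * ‖θ0 - θstar0‖ ^ 2 + b / ρ := by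
    intro n
    induction n with
    | zero => rw [he0]; simp; linarith
    | succ k ih =>
      have h := hstep k
      calc ∫ ω, ‖θ (k + 1) ω - θstar (k + 1) ω‖ ^ 2 ∂P
          ≤ (1 - ρ) * ∫ ω, ‖θ k ω - θstar k ω‖ ^ 2 ∂P + b := h
        _ ≤ (1 - ρ) * ((1 - ρ) ^ k * ‖θ0 - θstar0‖ ^ 2 + b / ρ) + b :=
            add_le_add_left (mul_le_mul_of_nonneg_left ih h1ρ) b
        _ = (1 - ρ) ^ (k + 1) * ‖θ0 - θstar0‖ ^ 2 + b / ρ := by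
            field_simp
            ring
  have hbρ : b / ρ ≤ 2 * E := by
    have hbρeq : b / ρ = 2 * (σ ^ 2 * γstar / μ) + 6 * (Δ ^ 2 / (μ ^ 2 * γstar ^ 2)) := by
      rw [hbdef, hρdef]
      field_simp
      ring
    have hEeq : E = σ ^ 2 * γstar / μ + 4 * (Δ ^ 2 / (μ ^ 2 * γstar ^ 2)) := by
      rw [hE]; ring
    have hnn : (0 : ℝ) ≤ Δ ^ 2 / (μ ^ 2 * γstar ^ 2) := by positivity
    rw [hbρeq, hEeq]
    linarith
  have hpow : (1 - ρ) ^ (t + 1) * ‖θ0 - θstar0‖ ^ 2 ≤ E := by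
    by_cases hcase : ‖θ0 - θstar0‖ ^ 2 ≤ E
    · have hp1 : (1 - ρ) ^ (t + 1) ≤ 1 := pow_le_one₀ h1ρ (by linarith)
      nlinarith
    · push_neg at hcase
      have he0pos : 0 < ‖θ0 - θstar0‖ ^ 2 := hEpos.trans hcase
      have hlog : Real.log (‖θ0 - θstar0‖ ^ 2 / E) ≤ ρ * t := by
        have hprod : ρ * (2 / (μ * γstar)) = 1 := by
          rw [hρdef]; field_simp
        calc Real.log (‖θ0 - θstar0‖ ^ 2 / E)
            = ρ * (2 / (μ * γstar) * Real.log (‖θ0 - θstar0‖ ^ 2 / E)) := by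
              rw [← mul_assoc, hprod, one_mul]
          _ ≤ ρ * t := mul_le_mul_of_nonneg_left ht hρpos.le
      have hexp : (1 - ρ) ^ (t + 1) ≤ Real.exp (-(ρ * (t + 1))) := by
        have h1 : 1 - ρ ≤ Real.exp (-ρ) := by linarith [Real.add_one_le_exp (-ρ)]
        have h2 : (1 - ρ) ^ (t + 1) ≤ Real.exp (-ρ) ^ (t + 1) := pow_le_pow_left₀ h1ρ h1 _
        have h3 : Real.exp (-ρ) ^ (t + 1) = Real.exp (-(ρ * (t + 1))) := by
          rw [← Real.exp_nat_mul]
          congr 1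
          push_cast
          ring
        rw [h3] at h2
        exact h2
      have hle : Real.exp (-(ρ * (t + 1))) ≤ E / ‖θ0 - θstar0‖ ^ 2 := by
        have h1 : Real.log (‖θ0 - θstar0‖ ^ 2 / E) ≤ ρ * (t + 1) := by
          have hρt : ρ * (t : ℝ) ≤ ρ * ((t : ℝ) + 1) := by nlinarith [hρpos.le]
          push_cast
          linarith
        have h2 : Real.exp (-(ρ * (t + 1))) ≤ Real.exp (-(Real.log (‖θ0 - θstar0‖ ^ 2 / E))) :=
          Real.exp_le_exp.mpr (by push_cast; push_cast at h1; linarith)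
        have h3 : Real.exp (-(Real.log (‖θ0 - θstar0‖ ^ 2 / E))) = E / ‖θ0 - θstar0‖ ^ 2 := by
          rw [← Real.log_inv, Real.exp_log (by positivity), inv_div]
        rw [h3] at h2
        push_cast at h2 ⊢
        exact h2
      calc (1 - ρ) ^ (t + 1) * ‖θ0 - θstar0‖ ^ 2
          ≤ E / ‖θ0 - θstar0‖ ^ 2 * ‖θ0 - θstar0‖ ^ 2 :=
            mul_le_mul_of_nonneg_right (hexp.trans hle) he0nn
        _ = E := div_mul_cancel₀ E he0pos.ne'
  have hfinal := hiter (t + 1)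
  linarith
end

section
/- Let 0 < μ ≤ L, β ∈ [0,1), and β′ ∈ ℝ with β′² ≤ 1. Let 0 < γ ≤ μ(1−β)²/(4L²) and set η := γ/(1−β). Define the 2×2 matrix Γ := [[a, b], [c, d]] with a = 1 − ημ, b = η β′² L²/μ, c = 2η² L²/(1−β), d = β + 2η² β′² L²/(1−β). Then a + c ≤ 1 − ημ/2 and b + d ≤ 3/8 + 5β/8 < 1; consequently the induced ℓ¹ matrix norm satisfies ‖Γ‖₁ = max{a + c, b + d} < 1, and hence the spectral radius of Γ is strictly less than 1. -/
set_option maxHeartbeats 1600000 in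
/-- Uniform stability of the 2×2 energy comparison matrix for SGD with momentum:
under the stepsize restriction `γ ≤ μ(1-β)²/(4L²)`, the column sums of
`Γ = [[a, b], [c, d]]` are bounded by `1 − ημ/2` and `3/8 + 5β/8 < 1`, hence the
induced ℓ¹ norm `max{a+c, b+d}` is `< 1` and every (complex) eigenvalue of `Γ`
has modulus `< 1`. -/
theorem sgdm_energy_matrix_stability
    (μ L β β' γ η a b c d : ℝ) (Γ : Matrix (Fin 2) (Fin 2) ℝ)
    (hμ : 0 < μ) (hμL : μ ≤ L) (hβ0 : 0 ≤ β) (hβ1 : β < 1)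
    (hβ' : β' ^ 2 ≤ 1)
    (hγ0 : 0 < γ) (hγ : γ ≤ μ * (1 - β) ^ 2 / (4 * L ^ 2))
    (hη : η = γ / (1 - β))
    (ha : a = 1 - η * μ)
    (hb : b = η * β' ^ 2 * L ^ 2 / μ)
    (hc : c = 2 * η ^ 2 * L ^ 2 / (1 - β))
    (hd : d = β + 2 * η ^ 2 * β' ^ 2 * L ^ 2 / (1 - β))
    (hΓ : Γ = !![a, b; c, d]) :
    a + c ≤ 1 - η * μ / 2 ∧
    b + d ≤ 3 / 8 + 5 * β / 8 ∧
    3 / 8 + 5 * β / 8 < 1 ∧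
    -- the induced ℓ¹ operator norm of Γ is the maximum column absolute sum
    max (|Γ 0 0| + |Γ 1 0|) (|Γ 0 1| + |Γ 1 1|) = max (a + c) (b + d) ∧
    max (a + c) (b + d) < 1 ∧
    -- hence the spectral radius of Γ is strictly less than 1
    ∀ z ∈ spectrum ℂ (Γ.map (algebraMap ℝ ℂ)), ‖z‖ < 1 := by
  have hβpos : (0:ℝ) < 1 - β := by linarith
  have hL : 0 < L := lt_of_lt_of_le hμ hμL
  have hη0 : 0 < η := by rw [hη]; positivity
  have hγη : γ = η * (1 - β) := by rw [hη]; field_simp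
  have hηL : η * L ^ 2 ≤ μ * (1 - β) / 4 := by
    have h4L : (0:ℝ) < 4 * L ^ 2 := by positivity
    rw [le_div_iff₀ h4L] at hγ
    rw [hγη] at hγ
    nlinarith [hβpos]
  have hμ2L2 : μ ^ 2 ≤ L ^ 2 := by nlinarith
  have hημ : η * μ ≤ (1 - β) / 4 := by
    have step : η * μ ^ 2 ≤ μ * (1 - β) / 4 :=
      le_trans (by nlinarith) hηL
    nlinarith [step, hμ]
  have hβ'0 : 0 ≤ β' ^ 2 := sq_nonneg β'
  have hcv : c ≤ η * μ / 2 := by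
    rw [hc, div_le_iff₀ hβpos]
    nlinarith [mul_le_mul_of_nonneg_left hηL (by positivity : (0:ℝ) ≤ 2 * η)]
  have h1 : a + c ≤ 1 - η * μ / 2 := by
    rw [ha]; linarith [hcv]
  have hbv : b ≤ (1 - β) / 4 := by
    rw [hb, div_le_iff₀ hμ]
    nlinarith [mul_nonneg hη0.le (sq_nonneg L), hβ', hηL,
      mul_nonneg (mul_nonneg hη0.le (sq_nonneg L)) (sub_nonneg.2 hβ')]
  have hq : 2 * η ^ 2 * L ^ 2 ≤ (1 - β) ^ 2 / 8 := by
    have h1' : 2 * η * (η * L ^ 2) ≤ 2 * η * (μ * (1 - β) / 4) :=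
      mul_le_mul_of_nonneg_left hηL (by positivity)
    have h2' : η * μ * ((1 - β) / 2) ≤ (1 - β) / 4 * ((1 - β) / 2) :=
      mul_le_mul_of_nonneg_right hημ (by positivity)
    linarith [h1', h2']
  have hdv : d ≤ β + (1 - β) / 8 := by
    rw [hd]
    have : 2 * η ^ 2 * β' ^ 2 * L ^ 2 / (1 - β) ≤ (1 - β) / 8 := by
      rw [div_le_div_iff₀ hβpos (by norm_num : (0:ℝ) < 8)]
      have hmono : 2 * η ^ 2 * L ^ 2 * β' ^ 2 ≤ 2 * η ^ 2 * L ^ 2 * 1 :=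
        mul_le_mul_of_nonneg_left hβ' (by positivity)
      linarith [hq, hmono]
    linarith
  have h2 : b + d ≤ 3 / 8 + 5 * β / 8 := by linarith
  have h3 : 3 / 8 + 5 * β / 8 < 1 := by linarith
  have ha0 : 0 ≤ a := by rw [ha]; linarith
  have hb0 : 0 ≤ b := by rw [hb]; positivity
  have hc0 : 0 ≤ c := by rw [hc]; positivity
  have hd0 : 0 ≤ d := by rw [hd]; positivity
  have hG00 : Γ 0 0 = a := by rw [hΓ]; simp
  have hG01 : Γ 0 1 = b := by rw [hΓ]; simp
  have hG10 : Γ 1 0 = c := by rw [hΓ]; simp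
  have hG11 : Γ 1 1 = d := by rw [hΓ]; simp
  have h4 : max (|Γ 0 0| + |Γ 1 0|) (|Γ 0 1| + |Γ 1 1|) = max (a + c) (b + d) := by
    rw [hG00, hG01, hG10, hG11, abs_of_nonneg ha0, abs_of_nonneg hb0,
      abs_of_nonneg hc0, abs_of_nonneg hd0]
  have hac1 : a + c < 1 := by nlinarith [h1, mul_pos hη0 hμ]
  have hbd1 : b + d < 1 := by linarith
  have h5 : max (a + c) (b + d) < 1 := max_lt hac1 hbd1
  refine ⟨h1, h2, h3, h4, h5, ?_⟩
  intro z hz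
  set M := Γ.map (algebraMap ℝ ℂ) with hM
  have hzT : z ∈ spectrum ℂ M.transpose := by
    rw [spectrum.mem_iff] at hz ⊢
    have h : algebraMap ℂ (Matrix (Fin 2) (Fin 2) ℂ) z - M.transpose
        = (algebraMap ℂ (Matrix (Fin 2) (Fin 2) ℂ) z - M).transpose := by
      simp [Matrix.transpose_sub, Matrix.algebraMap_eq_diagonal]
    rw [h, Matrix.isUnit_iff_isUnit_det, Matrix.det_transpose,
      ← Matrix.isUnit_iff_isUnit_det]
    exact hz
  have hev : Module.End.HasEigenvalue (Matrix.toLin' M.transpose) z := by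
    rw [← AlgEquiv.spectrum_eq (Matrix.toLinAlgEquiv (Pi.basisFun ℂ (Fin 2)))] at hzT
    exact Module.End.hasEigenvalue_iff_mem_spectrum.mpr hzT
  obtain ⟨k, hk⟩ := eigenvalue_mem_ball hev
  rw [Metric.mem_closedBall, dist_eq_norm] at hk
  have hnorm : ∀ i j : Fin 2, ‖M.transpose i j‖ = |Γ j i| := by
    intro i j
    simp [hM, Matrix.transpose_apply, Matrix.map_apply, Complex.norm_real]
  have key : ‖z‖ ≤ ‖z - M.transpose k k‖ + ‖M.transpose k k‖ := by
    calc ‖z‖ = ‖(z - M.transpose k k) + M.transpose k k‖ := by ring_nf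
      _ ≤ _ := norm_add_le _ _
  have hk01 : k = 0 ∨ k = 1 := by omega
  rcases hk01 with rfl | rfl
  · have he : (Finset.univ.erase (0 : Fin 2)) = {1} := by decide
    rw [he, Finset.sum_singleton] at hk
    have : ‖z‖ ≤ |Γ 0 0| + |Γ 1 0| := by
      rw [hnorm 0 0] at key; rw [hnorm 0 1] at hk; linarith
    rw [hG00, hG10, abs_of_nonneg ha0, abs_of_nonneg hc0] at this
    linarith
  · have he : (Finset.univ.erase (1 : Fin 2)) = {0} := by decide
    rw [he, Finset.sum_singleton] at hk
    have : ‖z‖ ≤ |Γ 0 1| + |Γ 1 1| := by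
      rw [hnorm 1 1] at key; rw [hnorm 1 0] at hk; linarith
    rw [hG01, hG11, abs_of_nonneg hb0, abs_of_nonneg hd0] at this
    linarith
end

section
/- In the bump-loss construction: if a/r ≤ 1/(12 C_ψ), then for each u ∈ {+1, −1} and every θ ∈ ℝ^d, the Hessian of g_u satisfies ‖∇²g_u(θ) − μ I_d‖_op ≤ μ/4. In particular, each g_u is μ/4-strongly convex and 2μ-smooth on all of ℝ^d (indeed (3μ/4) I_d ⪯ ∇²g_u(θ) ⪯ (5μ/4) I_d for all θ). -/
open scoped InnerProductSpace
open ContinuousLinearMap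

section BumpAux

variable {E : Type*} [NormedAddCommGroup E] [InnerProductSpace ℝ E] [CompleteSpace E]

lemma bump_inner_gradient (f : E → ℝ) (y v : E) : ⟪gradient f y, v⟫_ℝ = fderiv ℝ f y v := by
  rw [gradient, ← InnerProductSpace.toDual_apply_apply, LinearIsometryEquiv.apply_symm_apply]

noncomputable def bumpB (ψ : E → ℝ) (σ : ℝ) (e1 : E) (θ : E) : E :=
  ψ (σ • θ) • e1 + (σ * ⟪θ, e1⟫_ℝ) • gradient ψ (σ • θ)

noncomputable def bumpM (ψ : E → ℝ) (σ : ℝ) (e1 : E) (θ : E) : E →L[ℝ] E :=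
  σ • ((innerSL ℝ (gradient ψ (σ • θ))).smulRight e1
    + (innerSL ℝ e1).smulRight (gradient ψ (σ • θ))
    + (σ * ⟪θ, e1⟫_ℝ) • fderiv ℝ (gradient ψ) (σ • θ))

lemma bump_grad_contDiff {ψ : E → ℝ} (hψ : ContDiff ℝ 2 ψ) : ContDiff ℝ 1 (gradient ψ) := by
  have h1 : ContDiff ℝ 1 (fderiv ℝ ψ) := hψ.fderiv_right (by norm_num)
  have h2 : gradient ψ = fun x => (InnerProductSpace.toDual ℝ E).symm (fderiv ℝ ψ x) := rfl
  rw [h2]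
  exact (InnerProductSpace.toDual ℝ E).symm.contDiff.comp h1

lemma bumpB_hasFDerivAt {ψ : E → ℝ} (hψ : ContDiff ℝ 2 ψ) (σ : ℝ) (e1 θ : E) :
    HasFDerivAt (bumpB ψ σ e1) (bumpM ψ σ e1 θ) θ := by
  have hσ : HasFDerivAt (fun x : E => σ • x) (σ • ContinuousLinearMap.id ℝ E) θ :=
    (hasFDerivAt_id θ).const_smul σ
  have hψat : HasFDerivAt ψ (fderiv ℝ ψ (σ • θ)) (σ • θ) :=
    ((hψ.differentiable two_ne_zero) (σ • θ)).hasFDerivAt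
  have hcomp : HasFDerivAt (fun x : E => ψ (σ • x))
      ((fderiv ℝ ψ (σ • θ)).comp (σ • ContinuousLinearMap.id ℝ E)) θ := hψat.comp θ hσ
  have hgrad : HasFDerivAt (fun x : E => gradient ψ (σ • x))
      ((fderiv ℝ (gradient ψ) (σ • θ)).comp (σ • ContinuousLinearMap.id ℝ E)) θ :=
    (((bump_grad_contDiff hψ).differentiable one_ne_zero) (σ • θ)).hasFDerivAt.comp θ hσ
  have hi : HasFDerivAt (fun x : E => ⟪x, e1⟫_ℝ) (innerSL ℝ e1) θ := by
    have h : (fun x : E => ⟪x, e1⟫_ℝ) = fun x => innerSL ℝ e1 x :=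
      funext fun x => real_inner_comm _ _
    rw [h]; exact (innerSL ℝ e1).hasFDerivAt
  have hinner : HasFDerivAt (fun x : E => σ * ⟪x, e1⟫_ℝ) (σ • innerSL ℝ e1) θ := hi.const_mul σ
  have t1 := hcomp.smul (hasFDerivAt_const e1 θ)
  have t2 := hinner.smul hgrad
  have sum := t1.add t2
  convert sum using 1
  · rfl
  ext v
  have key : ∀ w : E, fderiv ℝ ψ (σ • θ) w = ⟪gradient ψ (σ • θ), w⟫_ℝ :=
    fun w => (bump_inner_gradient ψ (σ • θ) w).symm
  simp only [bumpM, ContinuousLinearMap.add_apply, ContinuousLinearMap.smul_apply,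
    ContinuousLinearMap.coe_comp', Function.comp_apply, ContinuousLinearMap.smulRight_apply,
    ContinuousLinearMap.coe_id', id_eq, innerSL_apply_apply, ContinuousLinearMap.zero_apply, key,
    real_inner_smul_right, smul_eq_mul, map_smul]
  module

lemma bump_hasGradientAt {ψ : E → ℝ} (hψ : ContDiff ℝ 2 ψ) (ν c σ : ℝ) (e1 θ : E) :
    HasGradientAt (fun x => ν / 2 * ‖x‖ ^ 2 - c * ⟪x, e1⟫_ℝ * ψ (σ • x))
      (ν • θ - c • bumpB ψ σ e1 θ) θ := by
  rw [hasGradientAt_iff_hasFDerivAt]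
  have hσ : HasFDerivAt (fun x : E => σ • x) (σ • ContinuousLinearMap.id ℝ E) θ :=
    (hasFDerivAt_id θ).const_smul σ
  have hψat : HasFDerivAt ψ (fderiv ℝ ψ (σ • θ)) (σ • θ) :=
    ((hψ.differentiable two_ne_zero) (σ • θ)).hasFDerivAt
  have hcomp : HasFDerivAt (fun x : E => ψ (σ • x))
      ((fderiv ℝ ψ (σ • θ)).comp (σ • ContinuousLinearMap.id ℝ E)) θ := hψat.comp θ hσ
  have hi : HasFDerivAt (fun x : E => ⟪x, e1⟫_ℝ) (innerSL ℝ e1) θ := by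
    have h : (fun x : E => ⟪x, e1⟫_ℝ) = fun x => innerSL ℝ e1 x :=
      funext fun x => real_inner_comm _ _
    rw [h]; exact (innerSL ℝ e1).hasFDerivAt
  have h1 : HasFDerivAt (fun x : E => ‖x‖ ^ 2) (2 • innerSL ℝ θ) θ :=
    (hasStrictFDerivAt_norm_sq θ).hasFDerivAt
  have sum := (h1.const_mul (ν / 2)).sub (((hi.mul hcomp).const_mul c))
  convert sum using 1
  · rfl
  · rfl
  · funext x; simp only [Pi.sub_apply, Pi.mul_apply]; ring
  ext v
  have key : ∀ w : E, fderiv ℝ ψ (σ • θ) w = ⟪gradient ψ (σ • θ), w⟫_ℝ :=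
    fun w => (bump_inner_gradient ψ (σ • θ) w).symm
  simp only [InnerProductSpace.toDual_apply_apply, bumpB, inner_sub_left, real_inner_smul_left,
    inner_add_left, ContinuousLinearMap.smul_apply, ContinuousLinearMap.add_apply,
    ContinuousLinearMap.sub_apply, ContinuousLinearMap.coe_comp', Function.comp_apply,
    ContinuousLinearMap.coe_id', id_eq,
    ContinuousLinearMap.coe_smul', Pi.smul_apply, innerSL_apply_apply, key, real_inner_smul_right,
    smul_eq_mul, nsmul_eq_mul, Nat.cast_ofNat]
  ring

lemma bumpG_hasFDerivAt {ψ : E → ℝ} (hψ : ContDiff ℝ 2 ψ) (ν c σ : ℝ) (e1 θ : E) :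
    HasFDerivAt (fun x => ν • x - c • bumpB ψ σ e1 x)
      (ν • ContinuousLinearMap.id ℝ E - c • bumpM ψ σ e1 θ) θ :=
  ((hasFDerivAt_id θ).const_smul ν).sub ((bumpB_hasFDerivAt hψ σ e1 θ).const_smul c)

lemma bump_hess_zero {ψ : E → ℝ} (hz : ∀ x : E, 1 ≤ ‖x‖ → ψ x = 0) {y : E} (hy : 1 < ‖y‖) :
    fderiv ℝ (gradient ψ) y = 0 := by
  have hop : IsOpen {z : E | 1 < ‖z‖} := isOpen_lt continuous_const continuous_norm
  have hgz : ∀ z : E, 1 < ‖z‖ → gradient ψ z = 0 := by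
    intro z hz1
    have hev : ψ =ᶠ[nhds z] fun _ => (0 : ℝ) := by
      filter_upwards [hop.mem_nhds hz1] with w hw
      exact hz w (le_of_lt hw)
    rw [gradient, hev.fderiv_eq, fderiv_const_apply, map_zero]
  have hev : gradient ψ =ᶠ[nhds y] fun _ => (0 : E) := by
    filter_upwards [hop.mem_nhds hy] with w hw
    exact hgz w hw
  rw [hev.fderiv_eq]
  exact fderiv_const_apply 0

lemma bumpM_norm_le {ψ : E → ℝ} {Cψ σ : ℝ} (hσ : 0 < σ) (hC : 0 ≤ Cψ)
    (hgrad : ∀ x, ‖gradient ψ x‖ ≤ Cψ)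
    (hhess : ∀ x, ‖fderiv ℝ (gradient ψ) x‖ ≤ Cψ)
    (hz : ∀ x : E, 1 ≤ ‖x‖ → ψ x = 0)
    {e1 : E} (he : ‖e1‖ = 1) (θ : E) :
    ‖bumpM ψ σ e1 θ‖ ≤ σ * (3 * Cψ) := by
  apply ContinuousLinearMap.opNorm_le_bound _ (by positivity)
  intro v
  have hA1 : ‖(⟪gradient ψ (σ • θ), v⟫_ℝ) • e1‖ ≤ Cψ * ‖v‖ := by
    rw [norm_smul, he, mul_one]
    calc ‖⟪gradient ψ (σ • θ), v⟫_ℝ‖ ≤ ‖gradient ψ (σ • θ)‖ * ‖v‖ := norm_inner_le_norm _ _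
    _ ≤ Cψ * ‖v‖ := by gcongr; exact hgrad _
  have hA2 : ‖(⟪e1, v⟫_ℝ) • gradient ψ (σ • θ)‖ ≤ Cψ * ‖v‖ := by
    rw [norm_smul]
    calc ‖⟪e1, v⟫_ℝ‖ * ‖gradient ψ (σ • θ)‖ ≤ (‖e1‖ * ‖v‖) * Cψ :=
          mul_le_mul (norm_inner_le_norm _ _) (hgrad _) (norm_nonneg _)
            (by positivity)
    _ = Cψ * ‖v‖ := by rw [he]; ring
  have hA3 : ‖(σ * ⟪θ, e1⟫_ℝ) • (fderiv ℝ (gradient ψ) (σ • θ) v)‖ ≤ Cψ * ‖v‖ := by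
    rcases le_or_gt ‖σ • θ‖ 1 with hle | hlt
    · have hcoef : ‖σ * ⟪θ, e1⟫_ℝ‖ ≤ 1 := by
        rw [norm_mul]
        calc ‖σ‖ * ‖⟪θ, e1⟫_ℝ‖ ≤ ‖σ‖ * (‖θ‖ * ‖e1‖) := by
              gcongr; exact norm_inner_le_norm _ _
        _ = ‖σ • θ‖ := by rw [he, norm_smul]; ring
        _ ≤ 1 := hle
      calc ‖(σ * ⟪θ, e1⟫_ℝ) • (fderiv ℝ (gradient ψ) (σ • θ) v)‖
          = ‖σ * ⟪θ, e1⟫_ℝ‖ * ‖fderiv ℝ (gradient ψ) (σ • θ) v‖ := norm_smul _ _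
        _ ≤ 1 * (‖fderiv ℝ (gradient ψ) (σ • θ)‖ * ‖v‖) :=
            mul_le_mul hcoef (ContinuousLinearMap.le_opNorm _ _) (norm_nonneg _) one_pos.le
        _ ≤ 1 * (Cψ * ‖v‖) := by
            gcongr
            exact hhess _
        _ = Cψ * ‖v‖ := one_mul _
    · rw [bump_hess_zero hz hlt]
      simp [norm_nonneg, mul_nonneg hC (norm_nonneg v)]
  calc ‖bumpM ψ σ e1 θ v‖
      = ‖σ‖ * ‖(⟪gradient ψ (σ • θ), v⟫_ℝ) • e1 + (⟪e1, v⟫_ℝ) • gradient ψ (σ • θ)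
          + (σ * ⟪θ, e1⟫_ℝ) • (fderiv ℝ (gradient ψ) (σ • θ) v)‖ := by
        rw [bumpM]
        simp only [ContinuousLinearMap.smul_apply, ContinuousLinearMap.add_apply,
          ContinuousLinearMap.smulRight_apply, innerSL_apply_apply, norm_smul]
    _ ≤ ‖σ‖ * (Cψ * ‖v‖ + Cψ * ‖v‖ + Cψ * ‖v‖) := by
        gcongr
        exact (norm_add_le _ _).trans (by gcongr; exact (norm_add_le _ _).trans (by gcongr))
    _ = σ * (3 * Cψ) * ‖v‖ := by rw [Real.norm_eq_abs, abs_of_pos hσ]; ring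

lemma convexOn_univ_of_hessian {f : E → ℝ} {f' : E → E} {f'' : E → E →L[ℝ] E}
    (h1 : ∀ x, HasGradientAt f (f' x) x)
    (h2 : ∀ x, HasFDerivAt f' (f'' x) x)
    (h3 : ∀ x v, 0 ≤ ⟪f'' x v, v⟫_ℝ) :
    ConvexOn ℝ Set.univ f := by
  refine ⟨convex_univ, ?_⟩
  intro x _ y _ a b ha hb hab
  set w := y - x with hw
  set z : ℝ → E := fun t => x + t • w with hz
  have hzderiv : ∀ t : ℝ, HasDerivAt z w t := by
    intro t
    simpa [hz] using ((hasDerivAt_id t).smul_const w).const_add x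
  have hφ : ∀ t : ℝ, HasDerivAt (fun s => f (z s)) ⟪f' (z t), w⟫_ℝ t := by
    intro t
    have h := ((h1 (z t)).hasFDerivAt).comp_hasDerivAt t (hzderiv t)
    simp only [InnerProductSpace.toDual_apply_apply] at h
    exact h
  have hφ' : ∀ t : ℝ, HasDerivAt (fun s => ⟪f' (z s), w⟫_ℝ) ⟪f'' (z t) w, w⟫_ℝ t := by
    intro t
    have hc : HasDerivAt (fun s => f' (z s)) (f'' (z t) w) t :=
      (h2 (z t)).comp_hasDerivAt t (hzderiv t)
    have h := hc.inner ℝ (hasDerivAt_const t w)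
    simpa using h
  have hdφ : deriv (fun s => f (z s)) = fun s => ⟪f' (z s), w⟫_ℝ :=
    funext fun t => (hφ t).deriv
  have hconv : ConvexOn ℝ Set.univ (fun s => f (z s)) := by
    apply convexOn_of_deriv2_nonneg convex_univ
    · exact (Differentiable.continuous fun t => (hφ t).differentiableAt).continuousOn
    · exact Differentiable.differentiableOn (fun t => (hφ t).differentiableAt)
    · rw [hdφ]
      exact Differentiable.differentiableOn (fun t => (hφ' t).differentiableAt)
    · intro t _
      simp only [Function.iterate_succ, Function.iterate_zero, Function.comp_apply, id_eq]
      rw [hdφ, (hφ' t).deriv]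
      exact h3 _ _
  have key := hconv.2 (Set.mem_univ (0 : ℝ)) (Set.mem_univ (1 : ℝ)) ha hb hab
  simp only [smul_eq_mul, mul_zero, mul_one, zero_add] at key
  have hz0 : z 0 = x := by simp [hz]
  have hz1 : z 1 = y := by simp [hz, hw]
  have hzb : z b = a • x + b • y := by
    have hab' : a = 1 - b := by linarith
    rw [hz, hw, hab']
    module
  rw [hz0, hz1, hzb] at key
  exact key

end BumpAux

set_option maxHeartbeats 2000000 in
/-- Smoothness and strong convexity of the localized bump losses
`g_u(θ) = (μ/2)‖θ‖² − u·μa·⟨θ,e₁⟩·ψ(θ/r)`: if `a/r ≤ 1/(12 C_ψ)` then for each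
`u ∈ {±1}` the Hessian satisfies `‖∇²g_u(θ) − μ I‖_op ≤ μ/4` for all `θ`; in
particular `(3μ/4) I ⪯ ∇²g_u ⪯ (5μ/4) I` everywhere, `g_u` is `μ/4`-strongly
convex and `2μ`-smooth on all of `ℝ^d`. -/
theorem bump_loss_smooth_strongly_convex
    (d : ℕ) (hd : 0 < d) (μ a r Cψ : ℝ)
    (hμ : 0 < μ) (ha : 0 < a) (hr : 0 < r) (hCψ : 0 < Cψ)
    (ψ : EuclideanSpace ℝ (Fin d) → ℝ)
    (hψ_smooth : ContDiff ℝ 2 ψ)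
    (hψ_range : ∀ x, 0 ≤ ψ x ∧ ψ x ≤ 1)
    (hψ_one : ∀ x, ‖x‖ ≤ 1 / 2 → ψ x = 1)
    (hψ_zero : ∀ x, 1 ≤ ‖x‖ → ψ x = 0)
    (hψ_grad : ∀ x, ‖gradient ψ x‖ ≤ Cψ)
    (hψ_hess : ∀ x, ‖fderiv ℝ (fun y => gradient ψ y) x‖ ≤ Cψ)
    (e1 : EuclideanSpace ℝ (Fin d))
    (he1 : e1 = EuclideanSpace.single (⟨0, hd⟩ : Fin d) 1)
    (g : ℝ → EuclideanSpace ℝ (Fin d) → ℝ)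
    (hg : ∀ u θ, g u θ = μ / 2 * ‖θ‖ ^ 2 - u * (μ * a) * ⟪θ, e1⟫_ℝ * ψ (r⁻¹ • θ))
    (har : a / r ≤ 1 / (12 * Cψ)) :
    ∀ u : ℝ, u = 1 ∨ u = -1 →
      (∀ θ, ‖fderiv ℝ (fun x => gradient (g u) x) θ
          - μ • ContinuousLinearMap.id ℝ (EuclideanSpace ℝ (Fin d))‖ ≤ μ / 4) ∧
      (∀ θ v, 3 * μ / 4 * ‖v‖ ^ 2
            ≤ ⟪fderiv ℝ (fun x => gradient (g u) x) θ v, v⟫_ℝ ∧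
          ⟪fderiv ℝ (fun x => gradient (g u) x) θ v, v⟫_ℝ ≤ 5 * μ / 4 * ‖v‖ ^ 2) ∧
      StrongConvexOn Set.univ (μ / 4) (g u) ∧
      LipschitzWith (Real.toNNReal (2 * μ)) (fun x => gradient (g u) x) := by
  intro u hu
  set c : ℝ := u * (μ * a) with hc
  have hcabs : |c| = μ * a := by
    have hpos : (0:ℝ) < μ * a := mul_pos hμ ha
    rcases hu with h | h <;> rw [hc, h]
    · rw [one_mul, abs_of_pos hpos]
    · rw [neg_one_mul, abs_neg, abs_of_pos hpos]
  have he1norm : ‖e1‖ = 1 := by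
    rw [he1, EuclideanSpace.norm_single, norm_one]
  have hψ_hess' : ∀ x, ‖fderiv ℝ (gradient ψ) x‖ ≤ Cψ := hψ_hess
  have hMle : ∀ θ, ‖bumpM ψ r⁻¹ e1 θ‖ ≤ r⁻¹ * (3 * Cψ) :=
    bumpM_norm_le (inv_pos.mpr hr) hCψ.le hψ_grad hψ_hess' hψ_zero he1norm
  have harith : μ * a * (r⁻¹ * (3 * Cψ)) ≤ μ / 4 := by
    have h12 : a * (12 * Cψ) ≤ r := by
      rw [div_le_div_iff₀ hr (by positivity)] at har
      linarith
    have heq : μ * a * (r⁻¹ * (3 * Cψ)) = (μ * (a * (3 * Cψ))) / r := by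
      rw [div_eq_mul_inv]; ring
    rw [heq, div_le_iff₀ hr]
    nlinarith [mul_nonneg hμ.le (sub_nonneg.mpr h12)]
  have hCM : ∀ θ, ‖c • bumpM ψ r⁻¹ e1 θ‖ ≤ μ / 4 := by
    intro θ
    calc ‖c • bumpM ψ r⁻¹ e1 θ‖ ≤ ‖c‖ * ‖bumpM ψ r⁻¹ e1 θ‖ :=
          ContinuousLinearMap.opNorm_smul_le _ _
      _ = μ * a * ‖bumpM ψ r⁻¹ e1 θ‖ := by rw [Real.norm_eq_abs, hcabs]
      _ ≤ μ * a * (r⁻¹ * (3 * Cψ)) :=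
          mul_le_mul_of_nonneg_left (hMle θ) (by positivity)
      _ ≤ μ / 4 := harith
  have hgu : g u = fun x => μ / 2 * ‖x‖ ^ 2 - c * ⟪x, e1⟫_ℝ * ψ (r⁻¹ • x) :=
    funext fun x => hg u x
  have hgradAt : ∀ x, HasGradientAt (g u) (μ • x - c • bumpB ψ r⁻¹ e1 x) x := by
    intro x
    rw [hgu]
    exact bump_hasGradientAt hψ_smooth μ c r⁻¹ e1 x
  have hgeq : gradient (g u) = fun x => μ • x - c • bumpB ψ r⁻¹ e1 x :=
    gradient_eq hgradAt
  have hgeq' : (fun x => gradient (g u) x) = fun x => μ • x - c • bumpB ψ r⁻¹ e1 x :=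
    funext fun x => congrFun hgeq x
  have hfderiv : ∀ θ, fderiv ℝ (fun x => gradient (g u) x) θ
      = μ • ContinuousLinearMap.id ℝ (EuclideanSpace ℝ (Fin d)) - c • bumpM ψ r⁻¹ e1 θ := by
    intro θ
    rw [hgeq']
    exact (bumpG_hasFDerivAt hψ_smooth μ c r⁻¹ e1 θ).fderiv
  have part1 : ∀ θ, ‖fderiv ℝ (fun x => gradient (g u) x) θ
      - μ • ContinuousLinearMap.id ℝ (EuclideanSpace ℝ (Fin d))‖ ≤ μ / 4 := by
    intro θ
    rw [hfderiv θ, sub_sub_cancel_left, norm_neg]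
    exact hCM θ
  refine ⟨part1, ?_, ?_, ?_⟩
  · intro θ v
    have hT := part1 θ
    set T := fderiv ℝ (fun x => gradient (g u) x) θ with hTdef
    set D := T - μ • ContinuousLinearMap.id ℝ (EuclideanSpace ℝ (Fin d)) with hD
    have hinner : |⟪D v, v⟫_ℝ| ≤ μ / 4 * ‖v‖ ^ 2 := by
      calc |⟪D v, v⟫_ℝ| ≤ ‖D v‖ * ‖v‖ := abs_real_inner_le_norm _ _
        _ ≤ (‖D‖ * ‖v‖) * ‖v‖ := by gcongr; exact D.le_opNorm v
        _ ≤ (μ / 4 * ‖v‖) * ‖v‖ := by gcongr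
        _ = μ / 4 * ‖v‖ ^ 2 := by ring
    have hdecomp : ⟪T v, v⟫_ℝ = ⟪D v, v⟫_ℝ + μ * ‖v‖ ^ 2 := by
      rw [hD]
      simp only [ContinuousLinearMap.sub_apply, ContinuousLinearMap.smul_apply,
        ContinuousLinearMap.id_apply, inner_sub_left, real_inner_smul_left,
        real_inner_self_eq_norm_sq]
      try ring
    have habs := abs_le.mp hinner
    constructor
    · rw [hdecomp]; linarith [habs.1]
    · rw [hdecomp]; linarith [habs.2]
  · apply strongConvexOn_iff_convex.mpr
    have hfun : (fun x => g u x - μ / 4 / (2:ℝ) * ‖x‖ ^ 2)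
        = fun x => (3 * μ / 4) / 2 * ‖x‖ ^ 2 - c * ⟪x, e1⟫_ℝ * ψ (r⁻¹ • x) := by
      funext x
      rw [hg]
      ring
    rw [hfun]
    apply convexOn_univ_of_hessian
      (f' := fun x => (3 * μ / 4) • x - c • bumpB ψ r⁻¹ e1 x)
      (f'' := fun x => (3 * μ / 4) • ContinuousLinearMap.id ℝ (EuclideanSpace ℝ (Fin d))
        - c • bumpM ψ r⁻¹ e1 x)
    · intro x
      exact bump_hasGradientAt hψ_smooth (3 * μ / 4) c r⁻¹ e1 x
    · intro x
      exact bumpG_hasFDerivAt hψ_smooth (3 * μ / 4) c r⁻¹ e1 x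
    · intro x v
      have h1 : |⟪(c • bumpM ψ r⁻¹ e1 x) v, v⟫_ℝ| ≤ μ / 4 * ‖v‖ ^ 2 := by
        calc |⟪(c • bumpM ψ r⁻¹ e1 x) v, v⟫_ℝ| ≤ ‖(c • bumpM ψ r⁻¹ e1 x) v‖ * ‖v‖ :=
              abs_real_inner_le_norm _ _
          _ ≤ (‖c • bumpM ψ r⁻¹ e1 x‖ * ‖v‖) * ‖v‖ := by
              gcongr; exact ContinuousLinearMap.le_opNorm _ v
          _ ≤ (μ / 4 * ‖v‖) * ‖v‖ := by gcongr; exact hCM x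
          _ = μ / 4 * ‖v‖ ^ 2 := by ring
      have hdecomp : ⟪((3 * μ / 4) • ContinuousLinearMap.id ℝ (EuclideanSpace ℝ (Fin d))
            - c • bumpM ψ r⁻¹ e1 x) v, v⟫_ℝ
          = 3 * μ / 4 * ‖v‖ ^ 2 - ⟪(c • bumpM ψ r⁻¹ e1 x) v, v⟫_ℝ := by
        simp only [ContinuousLinearMap.sub_apply, ContinuousLinearMap.smul_apply,
          ContinuousLinearMap.id_apply, inner_sub_left, real_inner_smul_left,
          real_inner_self_eq_norm_sq]
        try ring
      rw [hdecomp]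
      have hnn : 0 ≤ μ * ‖v‖ ^ 2 := by positivity
      have habs := abs_le.mp h1
      linarith [habs.2]
  · apply lipschitzWith_of_nnnorm_fderiv_le (𝕜 := ℝ)
    · rw [hgeq']
      exact fun θ => (bumpG_hasFDerivAt hψ_smooth μ c r⁻¹ e1 θ).differentiableAt
    · intro θ
      rw [← NNReal.coe_le_coe, coe_nnnorm, Real.coe_toNNReal _ (by positivity)]
      rw [hfderiv θ]
      calc ‖μ • ContinuousLinearMap.id ℝ (EuclideanSpace ℝ (Fin d)) - c • bumpM ψ r⁻¹ e1 θ‖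
          ≤ ‖μ • ContinuousLinearMap.id ℝ (EuclideanSpace ℝ (Fin d))‖ + ‖c • bumpM ψ r⁻¹ e1 θ‖ :=
            norm_sub_le _ _
        _ ≤ μ * 1 + μ / 4 := by
            refine add_le_add ?_ (hCM θ)
            calc ‖μ • ContinuousLinearMap.id ℝ (EuclideanSpace ℝ (Fin d))‖
                ≤ ‖μ‖ * ‖ContinuousLinearMap.id ℝ (EuclideanSpace ℝ (Fin d))‖ :=
                  ContinuousLinearMap.opNorm_smul_le _ _
              _ ≤ μ * 1 := by
                  rw [Real.norm_eq_abs, abs_of_pos hμ]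
                  exact mul_le_mul_of_nonneg_left norm_id_le hμ.le
        _ ≤ 2 * μ := by linarith
end

section
/- In the bump-loss construction, assume a ≤ r/4 and a/r ≤ 1/(12 C_ψ). Then: (i) for each u ∈ {+1, −1}, the point u·a·e₁ is the unique global minimizer of g_u on ℝ^d; (ii) for every θ ∈ ℝ^d, max{ g₊(θ) − g₊(a e₁), g₋(θ) − g₋(−a e₁) } ≥ μa²/8; consequently, for any nonempty Θ ⊆ ℝ^d the two-point discrepancy χ(g₊, g₋) := inf_{θ∈Θ} max{ g₊(θ) − inf_Θ g₊, g₋(θ) − inf_Θ g₋ } satisfies χ(g₊, g₋) ≥ μa²/8 whenever ±a e₁ ∈ Θ. -/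
open scoped InnerProductSpace

set_option maxHeartbeats 1600000 in
/-- Minimizers and two-point discrepancy of the bump-loss construction: under
`a ≤ r/4` and `a/r ≤ 1/(12 C_ψ)`, each `g_u` has `u·a·e₁` as its unique global
minimizer, the pointwise max of suboptimality gaps is at least `μa²/8`, and
consequently the two-point discrepancy `χ(g₊, g₋)` over any `Θ` containing
`±a·e₁` is at least `μa²/8`. -/
theorem bump_loss_minimizers_and_discrepancy
    (d : ℕ) (hd : 0 < d) (μ a r Cψ : ℝ)
    (hμ : 0 < μ) (ha : 0 < a) (hr : 0 < r) (hCψ : 0 < Cψ)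
    (ψ : EuclideanSpace ℝ (Fin d) → ℝ)
    (hψ_smooth : ContDiff ℝ 2 ψ)
    (hψ_range : ∀ x, 0 ≤ ψ x ∧ ψ x ≤ 1)
    (hψ_one : ∀ x, ‖x‖ ≤ 1 / 2 → ψ x = 1)
    (hψ_zero : ∀ x, 1 ≤ ‖x‖ → ψ x = 0)
    (hψ_grad : ∀ x, ‖gradient ψ x‖ ≤ Cψ)
    (hψ_hess : ∀ x, ‖fderiv ℝ (fun y => gradient ψ y) x‖ ≤ Cψ)
    (e1 : EuclideanSpace ℝ (Fin d))
    (he1 : e1 = EuclideanSpace.single (⟨0, hd⟩ : Fin d) 1)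
    (g : ℝ → EuclideanSpace ℝ (Fin d) → ℝ)
    (hg : ∀ u θ, g u θ = μ / 2 * ‖θ‖ ^ 2 - u * (μ * a) * ⟪θ, e1⟫_ℝ * ψ (r⁻¹ • θ))
    (har4 : a ≤ r / 4) (har : a / r ≤ 1 / (12 * Cψ)) :
    -- (i) unique global minimizers
    (∀ u : ℝ, u = 1 ∨ u = -1 →
      (∀ θ, g u ((u * a) • e1) ≤ g u θ) ∧
      (∀ θ, g u θ = g u ((u * a) • e1) → θ = (u * a) • e1)) ∧
    -- (ii) pointwise discrepancy lower bound
    (∀ θ, μ * a ^ 2 / 8 ≤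
      max (g 1 θ - g 1 (a • e1)) (g (-1) θ - g (-1) ((-a) • e1))) ∧
    -- consequence: two-point discrepancy over any Θ containing ±a·e₁
    (∀ Θ : Set (EuclideanSpace ℝ (Fin d)), a • e1 ∈ Θ → (-a) • e1 ∈ Θ →
      μ * a ^ 2 / 8 ≤
        sInf ((fun θ => max (g 1 θ - sInf (g 1 '' Θ)) (g (-1) θ - sInf (g (-1) '' Θ)))
          '' Θ)) := by
  have he1n : ‖e1‖ = 1 := by
    rw [he1, EuclideanSpace.norm_single]; norm_num
  have he1i : ⟪e1, e1⟫_ℝ = 1 := by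
    rw [real_inner_self_eq_norm_sq, he1n]; norm_num
  -- ψ = 1 near 0 along e1
  have hψ_at : ∀ c : ℝ, |c| ≤ r / 2 → ψ (r⁻¹ • (c • e1)) = 1 := by
    intro c hc
    apply hψ_one
    rw [norm_smul, norm_smul, he1n, mul_one, Real.norm_eq_abs, Real.norm_eq_abs,
      abs_of_pos (inv_pos.2 hr)]
    rw [inv_mul_le_iff₀ hr]
    linarith
  -- value at the minimizer
  have hval : ∀ u : ℝ, u = 1 ∨ u = -1 → g u ((u * a) • e1) = -(μ * a ^ 2 / 2) := by
    intro u hu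
    have h2 : u ^ 2 = 1 := by rcases hu with rfl | rfl <;> norm_num
    have habs : |u * a| ≤ r / 2 := by
      rcases hu with rfl | rfl <;>
        simp [abs_of_pos ha, abs_of_neg (neg_neg_iff_pos.mpr ha)] <;> linarith
    rw [hg, hψ_at _ habs, norm_smul, he1n, mul_one, real_inner_smul_left, he1i, mul_one,
      Real.norm_eq_abs, sq_abs]
    linear_combination (-(μ * a ^ 2) / 2) * h2
  -- lower bound for g u
  have hlow : ∀ u : ℝ, u = 1 ∨ u = -1 → ∀ θ, -(μ * a ^ 2 / 2) ≤ g u θ := by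
    intro u hu θ
    set t := ⟪θ, e1⟫_ℝ with htdef
    obtain ⟨hs0, hs1⟩ := hψ_range (r⁻¹ • θ)
    set s := ψ (r⁻¹ • θ) with hsdef
    have ht : |t| ≤ ‖θ‖ := by
      have := abs_real_inner_le_norm θ e1
      rwa [he1n, mul_one] at this
    have huts : u * t * s ≤ |t| := by
      rcases hu with rfl | rfl <;>
        nlinarith [le_abs_self t, neg_abs_le t, abs_nonneg t]
    rw [hg]
    have h1 : μ * a * (u * t * s) ≤ μ * a * ‖θ‖ := by
      apply mul_le_mul_of_nonneg_left (le_trans huts ht) (by positivity)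
    nlinarith [sq_nonneg (‖θ‖ - a), norm_nonneg θ]
  -- uniqueness
  have huniq : ∀ u : ℝ, u = 1 ∨ u = -1 → ∀ θ,
      g u θ = -(μ * a ^ 2 / 2) → θ = (u * a) • e1 := by
    intro u hu θ hθ
    set t := ⟪θ, e1⟫_ℝ with htdef
    obtain ⟨hs0, hs1⟩ := hψ_range (r⁻¹ • θ)
    set s := ψ (r⁻¹ • θ) with hsdef
    have ht : |t| ≤ ‖θ‖ := by
      have := abs_real_inner_le_norm θ e1
      rwa [he1n, mul_one] at this
    have huts : u * t * s ≤ |t| := by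
      rcases hu with rfl | rfl <;>
        nlinarith [le_abs_self t, neg_abs_le t, abs_nonneg t]
    rw [hg] at hθ
    -- all inequalities are equalities
    have hn : ‖θ‖ = a := by
      have hsq : (‖θ‖ - a) ^ 2 ≤ 0 := by
        nlinarith [norm_nonneg θ, mul_le_mul_of_nonneg_left (le_trans huts ht)
          (le_of_lt (mul_pos hμ ha))]
      have := le_antisymm hsq (sq_nonneg _)
      have := pow_eq_zero_iff (n := 2) (by norm_num) |>.mp this
      linarith
    have hutsa : u * t * s = a := by
      have hθ' := hθ
      rw [hn] at hθ'
      have heq : μ * a * (u * t * s) = μ * a * a := by linear_combination (-1 : ℝ) * hθ'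
      have hma : μ * a ≠ 0 := by positivity
      exact mul_left_cancel₀ hma heq
    have hta : |t| = a := by
      refine le_antisymm (by rw [← hn]; exact ht) ?_
      calc a = u * t * s := hutsa.symm
        _ ≤ |t| := huts
    have ht2 : t ^ 2 = a ^ 2 := by
      rw [← sq_abs, hta]
    -- θ = t • e1
    have hsub : θ = t • e1 := by
      have hnorm0 : ‖θ - t • e1‖ ^ 2 = 0 := by
        rw [norm_sub_sq_real, real_inner_smul_right, ← htdef, norm_smul, he1n, mul_one,
          Real.norm_eq_abs, sq_abs, hn]
        linear_combination (-1 : ℝ) * ht2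
      have := pow_eq_zero_iff (n := 2) (by norm_num) |>.mp hnorm0
      have := norm_eq_zero.mp this
      exact sub_eq_zero.mp this
    -- t = u * a
    have htu : t = u * a := by
      have hut : 0 ≤ u * t := by
        rcases eq_or_lt_of_le hs0 with h | h
        · exfalso; rw [← h] at hutsa; simp at hutsa; nlinarith
        · nlinarith [hutsa]
      have hut2 : (u * t) ^ 2 = a ^ 2 := by
        rcases hu with rfl | rfl <;> nlinarith [ht2]
      have : u * t = a := by nlinarith [hut, hut2]
      rcases hu with rfl | rfl <;> nlinarith [this]
    rw [hsub, htu]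
  -- convenient values
  have hv1 : g 1 (a • e1) = -(μ * a ^ 2 / 2) := by
    have := hval 1 (Or.inl rfl); simpa using this
  have hv2 : g (-1) ((-a) • e1) = -(μ * a ^ 2 / 2) := by
    have := hval (-1) (Or.inr rfl); simpa using this
  -- part (ii)
  have hpt : ∀ θ, μ * a ^ 2 / 8 ≤
      max (g 1 θ - g 1 (a • e1)) (g (-1) θ - g (-1) ((-a) • e1)) := by
    intro θ
    have hsum : g 1 θ + g (-1) θ = μ * ‖θ‖ ^ 2 := by rw [hg, hg]; ring
    by_contra h
    push_neg at h
    obtain ⟨h1, h2⟩ := max_lt_iff.mp h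
    rw [hv1] at h1; rw [hv2] at h2
    nlinarith [sq_nonneg ‖θ‖, mul_pos hμ (pow_pos ha 2), mul_nonneg hμ.le (sq_nonneg ‖θ‖)]
  refine ⟨?_, hpt, ?_⟩
  · intro u hu
    constructor
    · intro θ
      rw [hval u hu]
      exact hlow u hu θ
    · intro θ hθ
      rw [hval u hu] at hθ
      exact huniq u hu θ hθ
  · intro Θ hΘ1 hΘ2
    have hinf1 : sInf (g 1 '' Θ) = -(μ * a ^ 2 / 2) := by
      refine le_antisymm ?_ ?_
      · rw [← hv1]
        exact csInf_le ⟨-(μ * a ^ 2 / 2), by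
          rintro x ⟨θ, _, rfl⟩; exact hlow 1 (Or.inl rfl) θ⟩ ⟨a • e1, hΘ1, rfl⟩
      · exact le_csInf ⟨_, ⟨a • e1, hΘ1, rfl⟩⟩ (by
          rintro x ⟨θ, _, rfl⟩; exact hlow 1 (Or.inl rfl) θ)
    have hinf2 : sInf (g (-1) '' Θ) = -(μ * a ^ 2 / 2) := by
      refine le_antisymm ?_ ?_
      · rw [← hv2]
        exact csInf_le ⟨-(μ * a ^ 2 / 2), by
          rintro x ⟨θ, _, rfl⟩; exact hlow (-1) (Or.inr rfl) θ⟩ ⟨(-a) • e1, hΘ2, rfl⟩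
      · exact le_csInf ⟨_, ⟨(-a) • e1, hΘ2, rfl⟩⟩ (by
          rintro x ⟨θ, _, rfl⟩; exact hlow (-1) (Or.inr rfl) θ)
    refine le_csInf ⟨_, Set.mem_image_of_mem _ hΘ1⟩ ?_
    rintro b ⟨θ, _, rfl⟩
    have := hpt θ
    rw [hv1, hv2] at this
    simpa [hinf1, hinf2] using this
end

section
/- Fix μ, γ, σ > 0 and β ∈ [0,1), and set a := 1 + β − γμ. Consider the 2×2 matrices A := [[a, −β], [1, 0]] and B := (−γ, 0)ᵀ arising from the Heavy-Ball recursion x_{t+1} = (1+β−γμ)x_t − βx_{t−1} − γζ_{t+1} on the quadratic x ↦ (μ/2)x². Assume 0 < γμ < 2(1+β). Define v := (1+β)γσ² / ( (1−β)·μ·(2(1+β) − γμ) ) and c := a·v/(1+β). Then the symmetric matrix Σ := [[v, c], [c, v]] solves the discrete-time Lyapunov equation Σ = A Σ Aᵀ + σ² B Bᵀ. Moreover, if additionally γμ ≤ 1 + β, then v ≥ γσ²/(4μ(1−β)). -/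
/-- Exact stationary covariance of Heavy-Ball on a quadratic: the matrix
`Σ = [[v, c], [c, v]]` with `v = (1+β)γσ²/((1−β)μ(2(1+β)−γμ))` and
`c = a·v/(1+β)` solves the discrete-time Lyapunov equation
`Σ = A Σ Aᵀ + σ² B Bᵀ`, and in the small-step regime `γμ ≤ 1+β` the stationary
variance satisfies `v ≥ γσ²/(4μ(1−β))`. -/
theorem heavy_ball_stationary_variance
    (μ γ σ β : ℝ) (hμ : 0 < μ) (hγ : 0 < γ) (hσ : 0 < σ)
    (hβ0 : 0 ≤ β) (hβ1 : β < 1)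
    (hstab : γ * μ < 2 * (1 + β))
    (a v c : ℝ)
    (ha : a = 1 + β - γ * μ)
    (hv : v = (1 + β) * γ * σ ^ 2 / ((1 - β) * μ * (2 * (1 + β) - γ * μ)))
    (hc : c = a * v / (1 + β))
    (A : Matrix (Fin 2) (Fin 2) ℝ) (hA : A = !![a, -β; 1, 0])
    (B : Matrix (Fin 2) (Fin 1) ℝ) (hB : B = !![-γ; 0])
    (S : Matrix (Fin 2) (Fin 2) ℝ) (hS : S = !![v, c; c, v]) :
    S = A * S * A.transpose + σ ^ 2 • (B * B.transpose) ∧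
    (γ * μ ≤ 1 + β → γ * σ ^ 2 / (4 * μ * (1 - β)) ≤ v) := by
  have hβ1' : (0:ℝ) < 1 - β := by linarith
  have h1β : (0:ℝ) < 1 + β := by linarith
  have hγμ : (0:ℝ) < γ * μ := mul_pos hγ hμ
  have hden : (0:ℝ) < 2 * (1 + β) - γ * μ := by linarith
  have hvd : v * ((1 - β) * μ * (2 * (1 + β) - γ * μ)) = (1 + β) * γ * σ ^ 2 := by
    rw [hv, div_mul_cancel₀]
    positivity
  have hcb : c * (1 + β) = a * v := by
    rw [hc, div_mul_cancel₀]
    exact h1β.ne'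
  subst hA hB hS ha
  constructor
  · ext i j
    fin_cases i <;> fin_cases j <;>
      simp [Matrix.mul_apply, Matrix.transpose_apply, Fin.sum_univ_succ,
        Matrix.cons_val_zero, Matrix.cons_val_one, Matrix.head_cons, Matrix.vecHead,
        Matrix.vecTail, Matrix.vecMul, dotProduct]
    · refine mul_right_cancel₀ h1β.ne' ?_
      linear_combination (2 * (1 + β - γ * μ) * β) * hcb + γ * hvd
    · linear_combination hcb
    · linear_combination hcb
  · intro _
    rw [hv, div_le_div_iff₀ (by positivity) (by positivity)]
    nlinarith [mul_pos (mul_pos hγ (pow_pos hσ 2))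
      (mul_pos (mul_pos hβ1' hμ) (by linarith : (0:ℝ) < 2 * (1 + β) + γ * μ))]
end

section
/- Let μ > 0, γ > 0 and β ∈ [0,1) satisfy 0 < γμ ≤ min{(1 − √β)², (1−β)/4}. Then the quadratic polynomial λ² − (1 + β − γμ)λ + β has two real roots λ₋ ≤ λ₊, both roots lie in the interval [0, 1), and the larger root satisfies λ₊ ≥ 1 − 2γμ/(1−β). -/
/-- Roots of the Heavy-Ball characteristic polynomial
`λ² − (1 + β − γμ)λ + β` in the small-step regime
`γμ ≤ min{(1 − √β)², (1−β)/4}`: it has two real roots `λ₋ ≤ λ₊`, both lying in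
`[0, 1)`, and the larger one satisfies `λ₊ ≥ 1 − 2γμ/(1−β)` (inertia of
momentum). -/
theorem heavy_ball_characteristic_roots
    (μ γ β : ℝ) (hμ : 0 < μ) (hγ : 0 < γ) (hβ0 : 0 ≤ β) (hβ1 : β < 1)
    (hsmall : γ * μ ≤ min ((1 - Real.sqrt β) ^ 2) ((1 - β) / 4)) :
    ∃ lm lp : ℝ, lm ≤ lp ∧
      (∀ lam : ℝ, lam ^ 2 - (1 + β - γ * μ) * lam + β = 0 ↔ (lam = lm ∨ lam = lp)) ∧
      0 ≤ lm ∧ lm < 1 ∧ 0 ≤ lp ∧ lp < 1 ∧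
      1 - 2 * γ * μ / (1 - β) ≤ lp := by
  set s := Real.sqrt β with hs_def
  have hs0 : 0 ≤ s := Real.sqrt_nonneg β
  have hs2 : s ^ 2 = β := Real.sq_sqrt hβ0
  have hγμ : 0 < γ * μ := mul_pos hγ hμ
  have h1 : γ * μ ≤ (1 - s) ^ 2 := le_trans hsmall (min_le_left _ _)
  have h2 : γ * μ ≤ (1 - β) / 4 := le_trans hsmall (min_le_right _ _)
  set b : ℝ := 1 + β - γ * μ with hb_def
  have hs1 : s < 1 := by nlinarith
  have hb2s : 2 * s ≤ b := by nlinarith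
  have hb0 : 0 ≤ b := by nlinarith
  have hD0 : 0 ≤ b ^ 2 - 4 * β := by nlinarith
  set d : ℝ := Real.sqrt (b ^ 2 - 4 * β) with hd_def
  have hd0 : 0 ≤ d := Real.sqrt_nonneg _
  have hd2 : d ^ 2 = b ^ 2 - 4 * β := Real.sq_sqrt hD0
  clear_value s b d
  have hdb : d ≤ b := by nlinarith
  have hdlt : d < 2 - b := by nlinarith
  refine ⟨(b - d) / 2, (b + d) / 2, by linarith, ?_, by linarith, by linarith,
    by linarith, by linarith, ?_⟩
  · intro lam
    have hfac : (lam - (b - d) / 2) * (lam - (b + d) / 2) = lam ^ 2 - b * lam + β := by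
      linear_combination (-(1:ℝ)/4) * hd2
    constructor
    · intro h
      have h0 : (lam - (b - d) / 2) * (lam - (b + d) / 2) = 0 := by rw [hfac]; linarith
      rcases mul_eq_zero.mp h0 with h' | h'
      · left; linarith
      · right; linarith
    · rintro (rfl | rfl) <;> linear_combination ((1:ℝ)/4) * hd2
  · have hprod : (1 - (b - d) / 2) * (1 - (b + d) / 2) = γ * μ := by
      linear_combination (-(1:ℝ)/4) * hd2 - hb_def
    have hlmle : (b - d) / 2 ≤ s := by
      nlinarith [hd2, hs2, mul_le_mul_of_nonneg_left hdb hd0]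
    have hA : (0:ℝ) ≤ 1 - (b + d) / 2 := by linarith
    rw [sub_le_iff_le_add, ← sub_le_iff_le_add', le_div_iff₀ (by linarith : (0:ℝ) < 1 - β)]
    have h3 : (1 - (b + d) / 2) * ((b - d) / 2) ≤ (1 - (b + d) / 2) * s :=
      mul_le_mul_of_nonneg_left hlmle hA
    have h4 : (0:ℝ) ≤ (1 - (b + d) / 2) * (1 - s) ^ 2 := mul_nonneg hA (sq_nonneg _)
    have e1 : 2 * γ * μ - (1 - (b + d) / 2) * (1 - β) =
        (1 - (b + d) / 2) * (1 - s) ^ 2 +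
          2 * ((1 - (b + d) / 2) * s - (1 - (b + d) / 2) * ((b - d) / 2)) := by
      linear_combination (-2:ℝ) * hprod - (1 - (b + d) / 2) * hs2
    linarith
end

section
/- In the bump-loss construction, assume additionally the hypotheses a/r ≤ 1/(12 C_ψ) and let Θ ⊆ ℝ^d be Lebesgue-measurable, 1 ≤ p < ∞ and 1 ≤ q < ∞. Let T ≥ 1 and 1 ≤ J ≤ T, let B₁, …, B_J be a partition of {1, …, T} into J disjoint consecutive blocks, let u ∈ {+1, −1}^J, and define the blockwise-constant sequence G^u by G^u_t := g_{u_j} for all t ∈ B_j. Then ( ∑_{t=1}^{T−1} ‖∇G^u_{t+1} − ∇G^u_t‖_{L^p(Θ)}^q )^{1/q} ≤ 2μa(1 + C_ψ) · vol(B(0,r))^{1/p} · J^{1/q}, where ‖h‖_{L^p(Θ)} := ( ∫_Θ ‖h(θ)‖^p dθ )^{1/p} and vol(B(0,r)) is the Lebesgue measure of the Euclidean ball of radius r in ℝ^d. -/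
open MeasureTheory InnerProductSpace
open scoped InnerProductSpace ENNReal

lemma bump_grad_formula (d : ℕ) (μ a r : ℝ)
    (ψ : EuclideanSpace ℝ (Fin d) → ℝ) (hψ : Differentiable ℝ ψ)
    (e1 : EuclideanSpace ℝ (Fin d)) (u' : ℝ)
    (g : EuclideanSpace ℝ (Fin d) → ℝ)
    (hg : ∀ θ, g θ = μ / 2 * ‖θ‖ ^ 2 - u' * (μ * a) * ⟪θ, e1⟫_ℝ * ψ (r⁻¹ • θ))
    (θ : EuclideanSpace ℝ (Fin d)) :
    gradient g θ = μ • θ - (u' * (μ * a)) •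
      (ψ (r⁻¹ • θ) • e1 + (⟪θ, e1⟫_ℝ * r⁻¹) • gradient ψ (r⁻¹ • θ)) := by
  set x : EuclideanSpace ℝ (Fin d) := r⁻¹ • θ with hx
  have h1 : HasFDerivAt (fun y : EuclideanSpace ℝ (Fin d) => μ / 2 * ‖y‖ ^ 2)
      ((μ / 2) • (2 • innerSL ℝ θ)) θ :=
    (hasStrictFDerivAt_norm_sq θ).hasFDerivAt.const_mul (μ / 2)
  have h2 : HasFDerivAt (fun y : EuclideanSpace ℝ (Fin d) => ⟪y, e1⟫_ℝ) (innerSL ℝ e1) θ := by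
    refine ((innerSL ℝ e1).hasFDerivAt (x := θ)).congr_of_eventuallyEq ?_
    filter_upwards with y
    rw [innerSL_apply_apply]
    exact real_inner_comm e1 y
  have h3 : HasFDerivAt (fun y : EuclideanSpace ℝ (Fin d) => r⁻¹ • y)
      (r⁻¹ • (ContinuousLinearMap.id ℝ (EuclideanSpace ℝ (Fin d)))) θ := (hasFDerivAt_id θ).const_smul r⁻¹
  have h4 : HasFDerivAt ψ (fderiv ℝ ψ x) x := (hψ x).hasFDerivAt
  have h5 : HasFDerivAt (fun y : EuclideanSpace ℝ (Fin d) => ψ (r⁻¹ • y))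
      ((fderiv ℝ ψ x).comp (r⁻¹ • (ContinuousLinearMap.id ℝ (EuclideanSpace ℝ (Fin d))))) θ := h4.comp θ h3
  have h6 := h2.mul h5
  have h7 := h6.const_mul (u' * (μ * a))
  have h8 := h1.sub h7
  have hfun : g = fun y : EuclideanSpace ℝ (Fin d) =>
      μ / 2 * ‖y‖ ^ 2 - (u' * (μ * a)) * (⟪y, e1⟫_ℝ * ψ (r⁻¹ • y)) :=
    funext fun y => by rw [hg]; ring
  rw [hfun, (HasFDerivAt.hasGradientAt (f := fun y : EuclideanSpace ℝ (Fin d) =>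
      μ / 2 * ‖y‖ ^ 2 - (u' * (μ * a)) * (⟪y, e1⟫_ℝ * ψ (r⁻¹ • y))) h8).gradient]
  rw [show ∀ (L : (EuclideanSpace ℝ (Fin d)) →L[ℝ] ℝ) (v : EuclideanSpace ℝ (Fin d)),
      ((toDual ℝ (EuclideanSpace ℝ (Fin d))).symm L = v ↔ L = toDual ℝ (EuclideanSpace ℝ (Fin d)) v)
    from fun L v => (toDual ℝ (EuclideanSpace ℝ (Fin d))).toLinearEquiv.symm_apply_eq]
  ext y
  simp only [ContinuousLinearMap.sub_apply, ContinuousLinearMap.smul_apply,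
    ContinuousLinearMap.add_apply, ContinuousLinearMap.comp_apply,
    ContinuousLinearMap.id_apply, innerSL_apply_apply, smul_eq_mul,
    toDual_apply_apply, inner_sub_left, inner_add_left, inner_smul_left,
    real_inner_smul_left, RCLike.star_def, conj_trivial]
  have hgrad : ⟪gradient ψ x, y⟫_ℝ = fderiv ℝ ψ x y := by
    simp [gradient, toDual_symm_apply]
  rw [hgrad, (fderiv ℝ ψ x).map_smul, smul_eq_mul]
  ring

/-- Gradient-variation budget of the `J`-block construction: for a blockwise-constant
sequence `G^u_t = g_{u_j}` (for `t` in block `j`) built from the bump losses, the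
`L_{p,q}` gradient-variation functional is at most
`2μa(1 + C_ψ)·vol(B(0,r))^{1/p}·J^{1/q}`. The block structure is encoded by a
monotone surjective block-index map `b : {1,…,T} → {0,…,J−1}`. -/
theorem bump_loss_block_gradient_variation_bound
    (d : ℕ) (hd : 0 < d) (μ a r Cψ : ℝ)
    (hμ : 0 < μ) (ha : 0 < a) (hr : 0 < r) (hCψ : 0 < Cψ)
    (ψ : EuclideanSpace ℝ (Fin d) → ℝ)
    (hψ_smooth : ContDiff ℝ 2 ψ)
    (hψ_range : ∀ x, 0 ≤ ψ x ∧ ψ x ≤ 1)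
    (hψ_one : ∀ x, ‖x‖ ≤ 1 / 2 → ψ x = 1)
    (hψ_zero : ∀ x, 1 ≤ ‖x‖ → ψ x = 0)
    (hψ_grad : ∀ x, ‖gradient ψ x‖ ≤ Cψ)
    (hψ_hess : ∀ x, ‖fderiv ℝ (fun y => gradient ψ y) x‖ ≤ Cψ)
    (e1 : EuclideanSpace ℝ (Fin d))
    (he1 : e1 = EuclideanSpace.single (⟨0, hd⟩ : Fin d) 1)
    (g : ℝ → EuclideanSpace ℝ (Fin d) → ℝ)
    (hg : ∀ u θ, g u θ = μ / 2 * ‖θ‖ ^ 2 - u * (μ * a) * ⟪θ, e1⟫_ℝ * ψ (r⁻¹ • θ))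
    (har : a / r ≤ 1 / (12 * Cψ))
    (Θ : Set (EuclideanSpace ℝ (Fin d))) (hΘ : MeasurableSet Θ)
    (p q : ℝ) (hp : 1 ≤ p) (hq : 1 ≤ q)
    (T J : ℕ) (hT : 1 ≤ T) (hJ1 : 1 ≤ J) (hJT : J ≤ T)
    -- block-index map: `b t` is the index of the block containing time `t`
    (b : ℕ → ℕ)
    (hb_lt : ∀ t, 1 ≤ t → t ≤ T → b t < J)
    (hb_mono : ∀ s t, 1 ≤ s → s ≤ t → t ≤ T → b s ≤ b t)
    (hb_surj : ∀ j < J, ∃ t, 1 ≤ t ∧ t ≤ T ∧ b t = j)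
    -- signs of the blocks
    (u : ℕ → ℝ) (hu : ∀ j, u j = 1 ∨ u j = -1) :
    (∑ t ∈ Finset.Icc 1 (T - 1),
        ((∫⁻ θ in Θ,
            (‖gradient (g (u (b (t + 1)))) θ - gradient (g (u (b t))) θ‖₊ : ℝ≥0∞) ^ p
              ∂volume) ^ (1 / p)) ^ q) ^ (1 / q) ≤
      ENNReal.ofReal (2 * μ * a * (1 + Cψ))
        * volume (Metric.ball (0 : EuclideanSpace ℝ (Fin d)) r) ^ (1 / p)
        * (J : ℝ≥0∞) ^ (1 / q) := by
  classical
  have hp0 : (0:ℝ) < p := lt_of_lt_of_le one_pos hp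
  have hq0 : (0:ℝ) < q := lt_of_lt_of_le one_pos hq
  have hψd : Differentiable ℝ ψ := hψ_smooth.differentiable (by norm_num)
  have hgr : ∀ (u' : ℝ) (θ : EuclideanSpace ℝ (Fin d)), gradient (g u') θ = μ • θ - (u' * (μ * a)) •
      (ψ (r⁻¹ • θ) • e1 + (⟪θ, e1⟫_ℝ * r⁻¹) • gradient ψ (r⁻¹ • θ)) :=
    fun u' θ => bump_grad_formula d μ a r ψ hψd e1 u' (g u') (fun θ => hg u' θ) θ
  have he1norm : ‖e1‖ = 1 := by rw [he1, EuclideanSpace.norm_single]; norm_num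
  haveI : Nontrivial (EuclideanSpace ℝ (Fin d)) :=
    nontrivial_of_ne e1 0 (fun h => by rw [h, norm_zero] at he1norm; norm_num at he1norm)
  -- pointwise bound inside the closed ball
  have hdiff_ball : ∀ (u₁ u₂ : ℝ), u₁ = 1 ∨ u₁ = -1 → u₂ = 1 ∨ u₂ = -1 →
      ∀ θ : EuclideanSpace ℝ (Fin d), ‖θ‖ ≤ r →
      ‖gradient (g u₁) θ - gradient (g u₂) θ‖ ≤ 2 * μ * a * (1 + Cψ) := by
    intro u₁ u₂ hu₁ hu₂ θ hθ
    set W : EuclideanSpace ℝ (Fin d) :=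
      ψ (r⁻¹ • θ) • e1 + (⟪θ, e1⟫_ℝ * r⁻¹) • gradient ψ (r⁻¹ • θ) with hW
    rw [hgr u₁ θ, hgr u₂ θ]
    have heq : (μ • θ - (u₁ * (μ * a)) • W) - (μ • θ - (u₂ * (μ * a)) • W)
        = ((u₂ - u₁) * (μ * a)) • W := by
      rw [sub_mul, sub_smul]; abel
    rw [heq, norm_smul]
    have hWnorm : ‖W‖ ≤ 1 + Cψ := by
      refine (norm_add_le _ _).trans ?_
      rw [norm_smul, norm_smul, he1norm, mul_one]
      have h1 : ‖ψ (r⁻¹ • θ)‖ ≤ 1 := by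
        rw [Real.norm_eq_abs]
        exact abs_le.mpr ⟨by linarith [(hψ_range (r⁻¹ • θ)).1], (hψ_range _).2⟩
      have h2 : ‖⟪θ, e1⟫_ℝ * r⁻¹‖ ≤ 1 := by
        rw [Real.norm_eq_abs, abs_mul, abs_inv, abs_of_pos hr]
        have h3 : |⟪θ, e1⟫_ℝ| ≤ r := by
          calc |⟪θ, e1⟫_ℝ| ≤ ‖θ‖ * ‖e1‖ := abs_real_inner_le_norm θ e1
            _ = ‖θ‖ := by rw [he1norm, mul_one]
            _ ≤ r := hθ
        calc |⟪θ, e1⟫_ℝ| * r⁻¹ ≤ r * r⁻¹ := by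
              apply mul_le_mul_of_nonneg_right h3 (by positivity)
          _ = 1 := mul_inv_cancel₀ hr.ne'
      nlinarith [hψ_grad (r⁻¹ • θ), norm_nonneg (gradient ψ (r⁻¹ • θ)),
        norm_nonneg (⟪θ, e1⟫_ℝ * r⁻¹ : ℝ)]
    have habs : ‖(u₂ - u₁) * (μ * a)‖ ≤ 2 * (μ * a) := by
      rw [Real.norm_eq_abs, abs_mul, abs_of_pos (by positivity : (0:ℝ) < μ * a)]
      have h4 : |u₂ - u₁| ≤ 2 := by rcases hu₁ with h|h <;> rcases hu₂ with h'|h' <;>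
        rw [h, h'] <;> norm_num
      exact mul_le_mul_of_nonneg_right h4 (by positivity)
    calc ‖(u₂ - u₁) * (μ * a)‖ * ‖W‖ ≤ (2 * (μ * a)) * (1 + Cψ) := by
          apply mul_le_mul habs hWnorm (norm_nonneg _) (by positivity)
      _ = 2 * μ * a * (1 + Cψ) := by ring
  -- difference vanishes outside the closed ball
  have hdiff_out : ∀ (u₁ u₂ : ℝ) (θ : EuclideanSpace ℝ (Fin d)), r < ‖θ‖ →
      gradient (g u₁) θ - gradient (g u₂) θ = 0 := by
    intro u₁ u₂ θ hθ
    have ho : IsOpen {y : EuclideanSpace ℝ (Fin d) | r < ‖y‖} :=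
      isOpen_lt continuous_const continuous_norm
    have hev : g u₁ =ᶠ[nhds θ] g u₂ := by
      filter_upwards [ho.mem_nhds hθ] with y hy
      have h0 : ψ (r⁻¹ • y) = 0 := by
        apply hψ_zero
        rw [norm_smul, norm_inv, Real.norm_eq_abs, abs_of_pos hr]
        have h5 : r⁻¹ * r ≤ r⁻¹ * ‖y‖ := mul_le_mul_of_nonneg_left (le_of_lt hy) (by positivity)
        rw [inv_mul_cancel₀ hr.ne'] at h5
        exact h5
      rw [hg, hg, h0]; ring
    rw [hev.gradient_eq, sub_self]
  -- per-term L^p bound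
  have hterm : ∀ (u₁ u₂ : ℝ), u₁ = 1 ∨ u₁ = -1 → u₂ = 1 ∨ u₂ = -1 →
      (∫⁻ θ in Θ, (‖gradient (g u₁) θ - gradient (g u₂) θ‖₊ : ℝ≥0∞) ^ p ∂volume) ^ (1 / p)
        ≤ ENNReal.ofReal (2 * μ * a * (1 + Cψ))
            * volume (Metric.ball (0 : EuclideanSpace ℝ (Fin d)) r) ^ (1 / p) := by
    intro u₁ u₂ hu₁ hu₂
    have hint : (∫⁻ θ in Θ, (‖gradient (g u₁) θ - gradient (g u₂) θ‖₊ : ℝ≥0∞) ^ p ∂volume)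
        ≤ ENNReal.ofReal (2 * μ * a * (1 + Cψ)) ^ p
          * volume (Metric.closedBall (0 : EuclideanSpace ℝ (Fin d)) r) := by
      calc (∫⁻ θ in Θ, (‖gradient (g u₁) θ - gradient (g u₂) θ‖₊ : ℝ≥0∞) ^ p ∂volume)
          ≤ ∫⁻ θ in Θ, (Metric.closedBall (0 : EuclideanSpace ℝ (Fin d)) r).indicator
              (fun _ => ENNReal.ofReal (2 * μ * a * (1 + Cψ)) ^ p) θ ∂volume := by
            apply lintegral_mono
            intro θ
            dsimp only
            by_cases hmem : θ ∈ Metric.closedBall (0 : EuclideanSpace ℝ (Fin d)) r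
            · rw [Set.indicator_of_mem hmem]
              apply ENNReal.rpow_le_rpow _ hp0.le
              rw [← enorm_eq_nnnorm, ← ofReal_norm]
              exact ENNReal.ofReal_le_ofReal
                (hdiff_ball u₁ u₂ hu₁ hu₂ θ (mem_closedBall_zero_iff.mp hmem))
            · rw [mem_closedBall_zero_iff] at hmem
              rw [hdiff_out u₁ u₂ θ (lt_of_not_ge hmem)]
              simp [ENNReal.zero_rpow_of_pos hp0]
        _ = ENNReal.ofReal (2 * μ * a * (1 + Cψ)) ^ p
            * (volume.restrict Θ) (Metric.closedBall (0 : EuclideanSpace ℝ (Fin d)) r) := by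
            rw [lintegral_indicator measurableSet_closedBall, setLIntegral_const]
        _ ≤ ENNReal.ofReal (2 * μ * a * (1 + Cψ)) ^ p
            * volume (Metric.closedBall (0 : EuclideanSpace ℝ (Fin d)) r) := by
            apply mul_le_mul_right
            exact Measure.restrict_le_self _
    have hvol : volume (Metric.closedBall (0 : EuclideanSpace ℝ (Fin d)) r)
        = volume (Metric.ball (0 : EuclideanSpace ℝ (Fin d)) r) :=
      Measure.addHaar_closedBall_eq_addHaar_ball _ _ _
    rw [hvol] at hint
    calc (∫⁻ θ in Θ, (‖gradient (g u₁) θ - gradient (g u₂) θ‖₊ : ℝ≥0∞) ^ p ∂volume) ^ (1 / p)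
        ≤ (ENNReal.ofReal (2 * μ * a * (1 + Cψ)) ^ p
            * volume (Metric.ball (0 : EuclideanSpace ℝ (Fin d)) r)) ^ (1 / p) :=
          ENNReal.rpow_le_rpow hint (by positivity)
      _ = ENNReal.ofReal (2 * μ * a * (1 + Cψ))
            * volume (Metric.ball (0 : EuclideanSpace ℝ (Fin d)) r) ^ (1 / p) := by
          rw [ENNReal.mul_rpow_of_nonneg _ _ (by positivity : (0:ℝ) ≤ 1 / p),
            ← ENNReal.rpow_mul, mul_one_div_cancel hp0.ne', ENNReal.rpow_one]
  -- the boundary set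
  set S : Finset ℕ := (Finset.Icc 1 (T - 1)).filter (fun t => b (t + 1) ≠ b t) with hS
  have hzero : ∀ t ∈ Finset.Icc 1 (T - 1), t ∉ S →
      ((∫⁻ θ in Θ,
          (‖gradient (g (u (b (t + 1)))) θ - gradient (g (u (b t))) θ‖₊ : ℝ≥0∞) ^ p
            ∂volume) ^ (1 / p)) ^ q = 0 := by
    intro t ht hts
    have hb : b (t + 1) = b t := by
      by_contra h
      exact hts (Finset.mem_filter.mpr ⟨ht, h⟩)
    simp only [hb, sub_self, nnnorm_zero, ENNReal.coe_zero, ENNReal.zero_rpow_of_pos hp0,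
      lintegral_zero, ENNReal.zero_rpow_of_pos (by positivity : (0:ℝ) < 1 / p),
      ENNReal.zero_rpow_of_pos hq0]
  have hsum : (∑ t ∈ Finset.Icc 1 (T - 1),
      ((∫⁻ θ in Θ,
          (‖gradient (g (u (b (t + 1)))) θ - gradient (g (u (b t))) θ‖₊ : ℝ≥0∞) ^ p
            ∂volume) ^ (1 / p)) ^ q)
      = ∑ t ∈ S,
      ((∫⁻ θ in Θ,
          (‖gradient (g (u (b (t + 1)))) θ - gradient (g (u (b t))) θ‖₊ : ℝ≥0∞) ^ p
            ∂volume) ^ (1 / p)) ^ q :=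
    (Finset.sum_subset (Finset.filter_subset _ _) hzero).symm
  have hcard : S.card ≤ J := by
    have := Finset.card_le_card_of_injOn (fun t => b (t + 1))
      (fun t ht => ?_) (s := S) (t := Finset.range J) ?_
    · simpa using this
    · have ht' := Finset.mem_filter.mp ht
      have htIcc := Finset.mem_Icc.mp ht'.1
      exact Finset.mem_range.mpr (hb_lt (t + 1) (by omega) (by omega))
    · intro t₁ h₁ t₂ h₂ heq
      have h₁' := Finset.mem_filter.mp h₁
      have h₂' := Finset.mem_filter.mp h₂
      have h₁Icc := Finset.mem_Icc.mp h₁'.1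
      have h₂Icc := Finset.mem_Icc.mp h₂'.1
      rcases lt_trichotomy t₁ t₂ with h | h | h
      · exfalso
        have ha1 : b (t₁ + 1) ≤ b t₂ := hb_mono (t₁ + 1) t₂ (by omega) (by omega) (by omega)
        have ha2 : b t₂ ≤ b (t₂ + 1) := hb_mono t₂ (t₂ + 1) (by omega) (by omega) (by omega)
        have ha3 : b t₂ ≠ b (t₂ + 1) := fun h' => h₂'.2 h'.symm
        simp only at heq
        omega
      · exact h
      · exfalso
        have ha1 : b (t₂ + 1) ≤ b t₁ := hb_mono (t₂ + 1) t₁ (by omega) (by omega) (by omega)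
        have ha2 : b t₁ ≤ b (t₁ + 1) := hb_mono t₁ (t₁ + 1) (by omega) (by omega) (by omega)
        have ha3 : b t₁ ≠ b (t₁ + 1) := fun h' => h₁'.2 h'.symm
        simp only at heq
        omega
  have hboundS : (∑ t ∈ S,
      ((∫⁻ θ in Θ,
          (‖gradient (g (u (b (t + 1)))) θ - gradient (g (u (b t))) θ‖₊ : ℝ≥0∞) ^ p
            ∂volume) ^ (1 / p)) ^ q)
      ≤ S.card • (ENNReal.ofReal (2 * μ * a * (1 + Cψ))
          * volume (Metric.ball (0 : EuclideanSpace ℝ (Fin d)) r) ^ (1 / p)) ^ q := by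
    apply Finset.sum_le_card_nsmul
    intro t _
    exact ENNReal.rpow_le_rpow (hterm (u (b (t + 1))) (u (b t)) (hu _) (hu _)) hq0.le
  calc (∑ t ∈ Finset.Icc 1 (T - 1),
        ((∫⁻ θ in Θ,
            (‖gradient (g (u (b (t + 1)))) θ - gradient (g (u (b t))) θ‖₊ : ℝ≥0∞) ^ p
              ∂volume) ^ (1 / p)) ^ q) ^ (1 / q)
      ≤ ((J : ℝ≥0∞) * (ENNReal.ofReal (2 * μ * a * (1 + Cψ))
          * volume (Metric.ball (0 : EuclideanSpace ℝ (Fin d)) r) ^ (1 / p)) ^ q) ^ (1 / q) := by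
        rw [hsum]
        apply ENNReal.rpow_le_rpow _ (by positivity : (0:ℝ) ≤ 1 / q)
        refine hboundS.trans ?_
        rw [nsmul_eq_mul]
        exact mul_le_mul_left (by exact_mod_cast Nat.cast_le.mpr hcard) _
    _ = ENNReal.ofReal (2 * μ * a * (1 + Cψ))
          * volume (Metric.ball (0 : EuclideanSpace ℝ (Fin d)) r) ^ (1 / p)
          * (J : ℝ≥0∞) ^ (1 / q) := by
        rw [ENNReal.mul_rpow_of_nonneg _ _ (by positivity : (0:ℝ) ≤ 1 / q),
          ← ENNReal.rpow_mul, mul_one_div_cancel hq0.ne', ENNReal.rpow_one, mul_comm]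
end

section
/- Let (Ω, 𝓕, (𝓕_t)_{t=0}^T, ℙ) be a filtered probability space and let Z₁, …, Z_T be real random variables such that each Z_t is 𝓕_t-measurable, 𝔼[Z_t | 𝓕_{t−1}] = 0 a.s., and Z_t is conditionally sub-exponential: there are constants K_t > 0 with 𝔼[exp(|Z_t|/K_t) | 𝓕_{t−1}] ≤ 2 almost surely, for t = 1, …, T. Then there exists a universal constant C > 0 (independent of T, the K_t and the filtration) such that for all s ≥ 0: ℙ( ∑_{t=1}^T Z_t ≥ s ) ≤ exp( −min{ s²/(C ∑_{t=1}^T K_t²), s/(C max_{1≤t≤T} K_t) } ). -/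
open MeasureTheory

section Aux

open Real

private lemma bsm_exp_le (x : ℝ) :
    Real.exp x ≤ 1 + x + x ^ 2 * Real.exp |x| := by
  have h1 : (1 : ℝ) ≤ Real.exp |x| := by
    rw [Real.one_le_exp_iff]; positivity
  by_cases h : |x| ≤ 1
  · have hb := Real.exp_bound h (n := 2) (by norm_num)
    simp [Finset.sum_range_succ] at hb
    rw [abs_le] at hb
    nlinarith [sq_nonneg x, sq_abs x]
  · push_neg at h
    have hx2 : 1 ≤ x ^ 2 := by nlinarith [sq_abs x, abs_nonneg x]
    rcases le_or_gt 0 (1 + x) with hx | hx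
    · have : Real.exp x ≤ Real.exp |x| := Real.exp_le_exp.2 (le_abs_self x)
      nlinarith
    · have : Real.exp x ≤ 1 := by
        rw [Real.exp_le_one_iff]; nlinarith
      nlinarith

private lemma bsm_mul_int {Ω : Type} {m0 : MeasurableSpace Ω} {P : Measure Ω}
    [IsProbabilityMeasure P] {m : MeasurableSpace Ω} (hm : m ≤ m0) {X Y : Ω → ℝ} {B : ℝ}
    (hB : 0 ≤ B) (hX0 : ∀ ω, 0 ≤ X ω) (hY0 : ∀ ω, 0 ≤ Y ω)
    (hXm : StronglyMeasurable[m] X) (hX : Integrable X P) (hY : Integrable Y P)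
    (hcond : ∀ᵐ ω ∂P, (P[Y|m]) ω ≤ B) :
    Integrable (fun ω => X ω * Y ω) P ∧ ∫ ω, X ω * Y ω ∂P ≤ B * ∫ ω, X ω ∂P := by
  have hXsm : AEStronglyMeasurable[m0] X P := (hXm.mono hm).aestronglyMeasurable
  set Xk : ℕ → Ω → ℝ := fun k ω => min (X ω) k with hXk_def
  have hXk0 : ∀ k ω, 0 ≤ Xk k ω := fun k ω => le_min (hX0 ω) (by positivity)
  have hXk_le : ∀ k ω, Xk k ω ≤ X ω := fun k ω => min_le_left _ _
  have hXk_m : ∀ k, StronglyMeasurable[m] (Xk k) := fun k =>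
    hXm.inf stronglyMeasurable_const
  have hXk_int : ∀ k, Integrable (Xk k) P := fun k =>
    hX.mono' ((hXk_m k).mono hm).aestronglyMeasurable
      (Filter.Eventually.of_forall fun ω => by
        rw [Real.norm_eq_abs, abs_of_nonneg (hXk0 k ω)]; exact hXk_le k ω)
  have hXkY_int : ∀ k, Integrable (fun ω => Xk k ω * Y ω) P := fun k =>
    hY.bdd_mul ((hXk_m k).mono hm).aestronglyMeasurable
      (c := k) (Filter.Eventually.of_forall fun ω => by rw [Real.norm_eq_abs, abs_of_nonneg (hXk0 k ω)]; exact min_le_right _ _)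
  have key : ∀ k, ∫ ω, Xk k ω * Y ω ∂P ≤ B * ∫ ω, X ω ∂P := by
    intro k
    have hpull : P[fun ω => Xk k ω * Y ω|m] =ᵐ[P] fun ω => Xk k ω * (P[Y|m]) ω :=
      condExp_mul_of_stronglyMeasurable_left (hXk_m k) (hXkY_int k) hY
    calc ∫ ω, Xk k ω * Y ω ∂P = ∫ ω, (P[fun ω => Xk k ω * Y ω|m]) ω ∂P :=
          (integral_condExp hm).symm
      _ ≤ ∫ ω, B * Xk k ω ∂P := by
          refine integral_mono_ae integrable_condExp ((hXk_int k).const_mul B) ?_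
          filter_upwards [hpull, hcond] with ω h1 h2
          rw [h1]
          exact mul_le_mul_of_nonneg_left h2 (hXk0 k ω) |>.trans_eq (mul_comm _ _)
      _ = B * ∫ ω, Xk k ω ∂P := integral_const_mul _ _
      _ ≤ B * ∫ ω, X ω ∂P :=
          mul_le_mul_of_nonneg_left (integral_mono (hXk_int k) hX (hXk_le k)) hB
  have hmono : ∀ ω, Monotone fun k : ℕ => ENNReal.ofReal (Xk k ω * Y ω) := by
    intro ω k l hkl
    exact ENNReal.ofReal_le_ofReal
      (mul_le_mul_of_nonneg_right (min_le_min le_rfl (by exact_mod_cast hkl)) (hY0 ω))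
  have hsup : ∀ ω, (⨆ k : ℕ, ENNReal.ofReal (Xk k ω * Y ω)) = ENNReal.ofReal (X ω * Y ω) := by
    intro ω
    refine le_antisymm (iSup_le fun k => ENNReal.ofReal_le_ofReal
      (mul_le_mul_of_nonneg_right (hXk_le k ω) (hY0 ω))) ?_
    have : Xk ⌈X ω⌉₊ ω = X ω := min_eq_left (Nat.le_ceil _)
    exact le_iSup_of_le ⌈X ω⌉₊ (by rw [this])
  have hlim : ∫⁻ ω, ENNReal.ofReal (X ω * Y ω) ∂P ≤ ENNReal.ofReal (B * ∫ ω, X ω ∂P) := by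
    have := lintegral_iSup' (f := fun k ω => ENNReal.ofReal (Xk k ω * Y ω))
      (fun k => ((hXkY_int k).1.aemeasurable).ennreal_ofReal)
      (Filter.Eventually.of_forall fun ω => fun k l h => hmono ω h)
    calc ∫⁻ ω, ENNReal.ofReal (X ω * Y ω) ∂P
        = ∫⁻ ω, ⨆ k : ℕ, ENNReal.ofReal (Xk k ω * Y ω) ∂P := by
          refine lintegral_congr fun ω => (hsup ω).symm
      _ = ⨆ k : ℕ, ∫⁻ ω, ENNReal.ofReal (Xk k ω * Y ω) ∂P := this
      _ ≤ ENNReal.ofReal (B * ∫ ω, X ω ∂P) := by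
          refine iSup_le fun k => ?_
          rw [← ofReal_integral_eq_lintegral_ofReal (hXkY_int k)
            (Filter.Eventually.of_forall fun ω => mul_nonneg (hXk0 k ω) (hY0 ω))]
          exact ENNReal.ofReal_le_ofReal (key k)
  have hXY_sm : AEStronglyMeasurable[m0] (fun ω => X ω * Y ω) P := hXsm.mul hY.1
  have hXY_int : Integrable (fun ω => X ω * Y ω) P := by
    refine ⟨hXY_sm, ?_⟩
    rw [hasFiniteIntegral_iff_ofReal
      (Filter.Eventually.of_forall fun ω => mul_nonneg (hX0 ω) (hY0 ω))]
    exact hlim.trans_lt ENNReal.ofReal_lt_top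
  refine ⟨hXY_int, ?_⟩
  rw [← ofReal_integral_eq_lintegral_ofReal hXY_int
    (Filter.Eventually.of_forall fun ω => mul_nonneg (hX0 ω) (hY0 ω))] at hlim
  exact (ENNReal.ofReal_le_ofReal_iff
    (mul_nonneg hB (integral_nonneg hX0))).1 hlim

private lemma bsm_condexp_exp_le {Ω : Type} {m0 : MeasurableSpace Ω} {P : Measure Ω}
    [IsProbabilityMeasure P] {m : MeasurableSpace Ω} (hm : m ≤ m0) {Z : Ω → ℝ} {K l : ℝ}
    (hK : 0 < K) (hl0 : 0 ≤ l) (hl : l ≤ 1 / (2 * K))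
    (hZint : Integrable Z P)
    (hcond0 : P[Z|m] =ᵐ[P] fun _ => 0)
    (hexpint : Integrable (fun ω => Real.exp (|Z ω| / K)) P)
    (hcond2 : ∀ᵐ ω ∂P, (P[fun ω' => Real.exp (|Z ω'| / K)|m]) ω ≤ 2) :
    Integrable (fun ω => Real.exp (l * Z ω)) P ∧
      ∀ᵐ ω ∂P, (P[fun ω => Real.exp (l * Z ω)|m]) ω ≤ Real.exp (32 * l ^ 2 * K ^ 2) := by
  have habs : ∀ ω, |l * Z ω| ≤ |Z ω| / (2 * K) := by
    intro ω
    rw [abs_mul, abs_of_nonneg hl0]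
    calc l * |Z ω| ≤ (1 / (2 * K)) * |Z ω| :=
          mul_le_mul_of_nonneg_right hl (abs_nonneg _)
      _ = |Z ω| / (2 * K) := by ring
  have hpt : ∀ ω, Real.exp (l * Z ω) ≤
      1 + l * Z ω + 16 * l ^ 2 * K ^ 2 * Real.exp (|Z ω| / K) := by
    intro ω
    refine (bsm_exp_le (l * Z ω)).trans ?_
    have h1 : Real.exp |l * Z ω| ≤ Real.exp (|Z ω| / (2 * K)) :=
      Real.exp_le_exp.2 (habs ω)
    have hu : 0 ≤ |Z ω| / K := by positivity
    have h2 : (|Z ω| / K) ^ 2 ≤ 16 * Real.exp (|Z ω| / (2 * K)) := by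
      have h3 : |Z ω| / (2 * K) / 2 + 1 ≤ Real.exp (|Z ω| / (2 * K) / 2) :=
        Real.add_one_le_exp _
      have h4 : Real.exp (|Z ω| / (2 * K) / 2) ^ 2 = Real.exp (|Z ω| / (2 * K)) := by
        rw [← Real.exp_nat_mul]; norm_num; ring_nf
      have h5 : |Z ω| / (2 * K) / 2 = |Z ω| / K / 4 := by
        rw [div_div, div_div]
        congr 1
        ring
      nlinarith [hu, Real.exp_pos (|Z ω| / (2 * K) / 2)]
    have h6 : (l * Z ω) ^ 2 = l ^ 2 * K ^ 2 * (|Z ω| / K) ^ 2 := by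
      rw [mul_pow, div_pow, sq_abs]
      field_simp
    have h7 : Real.exp (|Z ω| / (2 * K)) ^ 2 = Real.exp (|Z ω| / K) := by
      rw [← Real.exp_nat_mul]
      congr 1
      field_simp
      ring
    have h8 : (l * Z ω) ^ 2 * Real.exp |l * Z ω| ≤
        16 * l ^ 2 * K ^ 2 * Real.exp (|Z ω| / K) := by
      calc (l * Z ω) ^ 2 * Real.exp |l * Z ω|
          ≤ (l * Z ω) ^ 2 * Real.exp (|Z ω| / (2 * K)) := by
            exact mul_le_mul_of_nonneg_left h1 (sq_nonneg _)
        _ = l ^ 2 * K ^ 2 * ((|Z ω| / K) ^ 2 * Real.exp (|Z ω| / (2 * K))) := by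
            rw [h6]; ring
        _ ≤ l ^ 2 * K ^ 2 * (16 * Real.exp (|Z ω| / (2 * K)) * Real.exp (|Z ω| / (2 * K))) := by
            refine mul_le_mul_of_nonneg_left ?_ (by positivity)
            exact mul_le_mul_of_nonneg_right h2 (Real.exp_pos _).le
        _ = 16 * l ^ 2 * K ^ 2 * Real.exp (|Z ω| / K) := by
            rw [← h7]; ring
    linarith
  have hint : Integrable (fun ω => Real.exp (l * Z ω)) P := by
    refine hexpint.mono' ?_ (Filter.Eventually.of_forall fun ω => ?_)
    · exact (Real.continuous_exp.comp
        (continuous_const.mul continuous_id)).comp_aestronglyMeasurable hZint.1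
    · rw [Real.norm_eq_abs, abs_of_pos (Real.exp_pos _)]
      refine Real.exp_le_exp.2 ((le_abs_self _).trans ((habs ω).trans ?_))
      refine div_le_div_of_nonneg_left (abs_nonneg _) hK ?_ |>.trans_eq ?_
      · linarith
      · rfl
  refine ⟨hint, ?_⟩
  have hg_int : Integrable (fun ω => 1 + l * Z ω + 16 * l ^ 2 * K ^ 2 * Real.exp (|Z ω| / K)) P :=
    ((integrable_const 1).add (hZint.const_mul l)).add (hexpint.const_mul _)
  have hmono := condExp_mono (μ := P) (m := m) hint hg_int
    (Filter.Eventually.of_forall hpt)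
  have hsplit : P[fun ω => 1 + l * Z ω + 16 * l ^ 2 * K ^ 2 * Real.exp (|Z ω| / K)|m]
      =ᵐ[P] fun ω => (P[fun ω => 1 + l * Z ω|m]) ω
        + (P[fun ω => 16 * l ^ 2 * K ^ 2 * Real.exp (|Z ω| / K)|m]) ω :=
    condExp_add ((integrable_const 1).add (hZint.const_mul l)) (hexpint.const_mul _) m
  have hsplit2 : P[fun ω => 1 + l * Z ω|m] =ᵐ[P]
      fun ω => (P[fun _ => (1:ℝ)|m]) ω + (P[fun ω => l * Z ω|m]) ω :=
    condExp_add (integrable_const 1) (hZint.const_mul l) m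
  have hconst : P[fun _ => (1:ℝ)|m] = fun _ => (1:ℝ) := condExp_const hm 1
  have hsmul1 : P[fun ω => l * Z ω|m] =ᵐ[P] fun ω => l * (P[Z|m]) ω := by
    simpa [Pi.smul_def, smul_eq_mul] using condExp_smul (μ := P) (m := m) l Z
  have hsmul2 : P[fun ω => 16 * l ^ 2 * K ^ 2 * Real.exp (|Z ω| / K)|m] =ᵐ[P]
      fun ω => 16 * l ^ 2 * K ^ 2 * (P[fun ω' => Real.exp (|Z ω'| / K)|m]) ω := by
    have := condExp_smul (μ := P) (m := m) (16 * l ^ 2 * K ^ 2) (fun ω => Real.exp (|Z ω| / K))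
    simp only [Pi.smul_def] at this
    exact this
  filter_upwards [hmono, hsplit, hsplit2, hsmul1, hsmul2, hcond0, hcond2] with ω
    h1 h2 h3 h4 h5 h6 h7
  have hb : (P[fun ω => Real.exp (l * Z ω)|m]) ω ≤ 1 + 32 * l ^ 2 * K ^ 2 := by
    have : (P[fun ω => 1 + l * Z ω + 16 * l ^ 2 * K ^ 2 * Real.exp (|Z ω| / K)|m]) ω
        ≤ 1 + 32 * l ^ 2 * K ^ 2 := by
      rw [h2, h3, hconst, h4, h5, h6]
      simp only [mul_zero, add_zero]
      nlinarith [sq_nonneg (l * K), mul_pow l K 2]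
    exact h1.trans this
  refine hb.trans ?_
  have := Real.add_one_le_exp (32 * l ^ 2 * K ^ 2)
  linarith

end Aux

/-- Bernstein-type concentration inequality for martingale difference sequences with
conditionally sub-exponential increments: there is a universal constant `C` such
that if `𝔼[Z_t | 𝓕_{t−1}] = 0` and `𝔼[exp(|Z_t|/K_t) | 𝓕_{t−1}] ≤ 2` a.s. for
`t = 1, …, T`, then for all `s ≥ 0`,
`ℙ(∑ Z_t ≥ s) ≤ exp(−min{s²/(C∑K_t²), s/(C·max K_t)})`. -/
theorem bernstein_subexponential_mds :
    ∃ C : ℝ, 0 < C ∧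
      ∀ (Ω : Type) (m0 : MeasurableSpace Ω) (P : Measure Ω), IsProbabilityMeasure P →
      ∀ (ℱ : Filtration ℕ m0) (T : ℕ) (Z : ℕ → Ω → ℝ) (K : ℕ → ℝ),
        (∀ t, 1 ≤ t → t ≤ T → 0 < K t) →
        (∀ t, 1 ≤ t → t ≤ T → StronglyMeasurable[ℱ t] (Z t)) →
        (∀ t, 1 ≤ t → t ≤ T → Integrable (Z t) P) →
        (∀ t, 1 ≤ t → t ≤ T → P[Z t | ℱ (t - 1)] =ᵐ[P] fun _ => 0) →
        (∀ t, 1 ≤ t → t ≤ T →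
          Integrable (fun ω => Real.exp (|Z t ω| / K t)) P) →
        (∀ t, 1 ≤ t → t ≤ T →
          ∀ᵐ ω ∂P, (P[fun ω' => Real.exp (|Z t ω'| / K t) | ℱ (t - 1)]) ω ≤ 2) →
        ∀ s : ℝ, 0 ≤ s →
          P {ω | s ≤ ∑ t ∈ Finset.Icc 1 T, Z t ω} ≤
            ENNReal.ofReal (Real.exp (-(min
              (s ^ 2 / (C * ∑ t ∈ Finset.Icc 1 T, K t ^ 2))
              (s / (C * ⨆ t ∈ Finset.Icc 1 T, K t))))) := by
  refine ⟨128, by norm_num, ?_⟩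
  intro Ω m0 P hP ℱ T Z K hK hSM hInt hcond0 hexpInt hcond2 s hs
  by_cases hs0 : s = 0
  · subst hs0
    simp only [ne_eq, OfNat.ofNat_ne_zero, not_false_eq_true, zero_pow, zero_div, min_self,
      neg_zero, Real.exp_zero, ENNReal.ofReal_one]
    exact prob_le_one
  have hspos : 0 < s := lt_of_le_of_ne hs (Ne.symm hs0)
  by_cases hT : T = 0
  · subst hT
    have : {ω : Ω | s ≤ ∑ t ∈ Finset.Icc 1 0, Z t ω} = ∅ := by
      ext ω
      simp only [Set.mem_setOf_eq, Set.mem_empty_iff_false, iff_false, not_le]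
      simpa using hspos
    rw [this]
    simp
  have hT1 : 1 ≤ T := Nat.one_le_iff_ne_zero.2 hT
  have h1T : 1 ∈ Finset.Icc 1 T := Finset.mem_Icc.2 ⟨le_rfl, hT1⟩
  set V : ℝ := ∑ t ∈ Finset.Icc 1 T, K t ^ 2 with hV_def
  set M : ℝ := ⨆ t ∈ Finset.Icc 1 T, K t with hM_def
  have hV : 0 < V :=
    Finset.sum_pos (fun t ht => by
      have := Finset.mem_Icc.1 ht
      exact pow_pos (hK t this.1 this.2) 2) ⟨1, h1T⟩
  have hbdd : BddAbove (Set.range fun t => ⨆ _ : t ∈ Finset.Icc 1 T, K t) := by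
    refine ⟨∑ t ∈ Finset.Icc 1 T, |K t|, ?_⟩
    rintro x ⟨t, rfl⟩
    dsimp only
    by_cases ht : t ∈ Finset.Icc 1 T
    · rw [ciSup_pos ht]
      exact (le_abs_self _).trans (Finset.single_le_sum (fun i _ => abs_nonneg (K i)) ht)
    · haveI : IsEmpty (t ∈ Finset.Icc 1 T) := by rwa [isEmpty_Prop]
      rw [Real.iSup_of_isEmpty]
      positivity
  have hKM : ∀ t ∈ Finset.Icc 1 T, K t ≤ M := by
    intro t ht
    have := le_ciSup hbdd t
    rwa [ciSup_pos ht] at this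
  have hM : 0 < M := lt_of_lt_of_le (hK 1 le_rfl hT1) (hKM 1 h1T)
  set l : ℝ := min (s / (64 * V)) (1 / (2 * M)) with hl_def
  have hl0 : 0 ≤ l := le_min (by positivity) (by positivity)
  have hlM : l ≤ 1 / (2 * M) := min_le_right _ _
  have hlK : ∀ t ∈ Finset.Icc 1 T, l ≤ 1 / (2 * K t) := by
    intro t ht
    refine hlM.trans ?_
    have h2K : 0 < 2 * K t := by
      have := Finset.mem_Icc.1 ht
      have := hK t this.1 this.2
      linarith
    exact one_div_le_one_div_of_le h2K (by linarith [hKM t ht])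
  -- per-step facts
  have hstep : ∀ t, 1 ≤ t → t ≤ T →
      Integrable (fun ω => Real.exp (l * Z t ω)) P ∧
        ∀ᵐ ω ∂P, (P[fun ω => Real.exp (l * Z t ω)|ℱ (t - 1)]) ω ≤
          Real.exp (32 * l ^ 2 * (K t) ^ 2) := by
    intro t h1 h2
    exact bsm_condexp_exp_le (ℱ.le (t - 1)) (hK t h1 h2) hl0
      (hlK t (Finset.mem_Icc.2 ⟨h1, h2⟩)) (hInt t h1 h2) (hcond0 t h1 h2)
      (hexpInt t h1 h2) (hcond2 t h1 h2)
  -- induction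
  have main : ∀ n, n ≤ T →
      Integrable (fun ω => Real.exp (l * ∑ t ∈ Finset.Icc 1 n, Z t ω)) P ∧
        ∫ ω, Real.exp (l * ∑ t ∈ Finset.Icc 1 n, Z t ω) ∂P ≤
          ∏ t ∈ Finset.Icc 1 n, Real.exp (32 * l ^ 2 * (K t) ^ 2) := by
    intro n
    induction n with
    | zero =>
        intro _
        constructor
        · simpa using (integrable_const (1:ℝ) : Integrable (fun _ : Ω => (1:ℝ)) P)
        · simp
    | succ n ih =>
        intro hn
        obtain ⟨ihInt, ihLe⟩ := ih (Nat.le_of_succ_le hn)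
        have hXm : StronglyMeasurable[ℱ n]
            (fun ω => Real.exp (l * ∑ t ∈ Finset.Icc 1 n, Z t ω)) := by
          refine Real.continuous_exp.comp_stronglyMeasurable ?_
          refine ((Finset.stronglyMeasurable_fun_sum _ fun t ht => ?_).const_mul l)
          have ht' := Finset.mem_Icc.1 ht
          exact (hSM t ht'.1 (ht'.2.trans (Nat.le_of_succ_le hn))).mono (ℱ.mono ht'.2)
        obtain ⟨hYint, hYcond⟩ := hstep (n + 1) (Nat.le_add_left 1 n) hn
        have hYcond' : ∀ᵐ ω ∂P, (P[fun ω => Real.exp (l * Z (n + 1) ω)|ℱ n]) ω ≤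
            Real.exp (32 * l ^ 2 * (K (n + 1)) ^ 2) := by
          simpa using hYcond
        have hres := bsm_mul_int (ℱ.le n) (Real.exp_pos _).le
          (fun ω => (Real.exp_pos _).le) (fun ω => (Real.exp_pos _).le)
          hXm ihInt hYint hYcond'
        have heq : ∀ ω, Real.exp (l * ∑ t ∈ Finset.Icc 1 (n + 1), Z t ω) =
            Real.exp (l * ∑ t ∈ Finset.Icc 1 n, Z t ω) * Real.exp (l * Z (n + 1) ω) := by
          intro ω
          rw [Finset.sum_Icc_succ_top (Nat.le_add_left 1 n), mul_add, Real.exp_add]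
        constructor
        · exact hres.1.congr (Filter.Eventually.of_forall fun ω => (heq ω).symm)
        · calc ∫ ω, Real.exp (l * ∑ t ∈ Finset.Icc 1 (n + 1), Z t ω) ∂P
              = ∫ ω, Real.exp (l * ∑ t ∈ Finset.Icc 1 n, Z t ω) *
                  Real.exp (l * Z (n + 1) ω) ∂P := by
                exact integral_congr_ae (Filter.Eventually.of_forall heq)
            _ ≤ Real.exp (32 * l ^ 2 * (K (n + 1)) ^ 2) *
                  ∫ ω, Real.exp (l * ∑ t ∈ Finset.Icc 1 n, Z t ω) ∂P := hres.2
            _ ≤ Real.exp (32 * l ^ 2 * (K (n + 1)) ^ 2) *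
                  ∏ t ∈ Finset.Icc 1 n, Real.exp (32 * l ^ 2 * (K t) ^ 2) :=
                mul_le_mul_of_nonneg_left ihLe (Real.exp_pos _).le
            _ = ∏ t ∈ Finset.Icc 1 (n + 1), Real.exp (32 * l ^ 2 * (K t) ^ 2) := by
                rw [Finset.prod_Icc_succ_top (Nat.le_add_left 1 n)]
                ring
  obtain ⟨hSint, hSle⟩ := main T le_rfl
  have hprod : (∏ t ∈ Finset.Icc 1 T, Real.exp (32 * l ^ 2 * (K t) ^ 2)) =
      Real.exp (32 * l ^ 2 * V) := by
    rw [← Real.exp_sum, hV_def, Finset.mul_sum]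
  -- Chernoff
  have hch := ProbabilityTheory.measure_ge_le_exp_mul_mgf
    (X := fun ω => ∑ t ∈ Finset.Icc 1 T, Z t ω) (μ := P) (t := l) s hl0 hSint
  have hmgf : ProbabilityTheory.mgf (fun ω => ∑ t ∈ Finset.Icc 1 T, Z t ω) P l =
      ∫ ω, Real.exp (l * ∑ t ∈ Finset.Icc 1 T, Z t ω) ∂P := rfl
  have hbound : (P {ω | s ≤ ∑ t ∈ Finset.Icc 1 T, Z t ω}).toReal ≤
      Real.exp (32 * l ^ 2 * V - l * s) := by
    refine hch.trans ?_
    rw [hmgf]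
    calc Real.exp (-l * s) * ∫ ω, Real.exp (l * ∑ t ∈ Finset.Icc 1 T, Z t ω) ∂P
        ≤ Real.exp (-l * s) * Real.exp (32 * l ^ 2 * V) := by
          refine mul_le_mul_of_nonneg_left (hSle.trans_eq hprod) (Real.exp_pos _).le
      _ = Real.exp (32 * l ^ 2 * V - l * s) := by
          rw [← Real.exp_add]; ring_nf
  -- final arithmetic
  have harith : 32 * l ^ 2 * V - l * s ≤
      -(min (s ^ 2 / (128 * V)) (s / (128 * M))) := by
    rcases le_total (s / (64 * V)) (1 / (2 * M)) with h | h
    · have hleq : l = s / (64 * V) := min_eq_left h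
      have : 32 * l ^ 2 * V - l * s = -(s ^ 2 / (128 * V)) := by
        rw [hleq]
        field_simp
        ring
      rw [this]
      exact neg_le_neg (min_le_left _ _)
    · have hleq : l = 1 / (2 * M) := min_eq_right h
      have h' : 64 * V ≤ 2 * M * s := by
        rw [div_le_div_iff₀ (by positivity) (by positivity)] at h
        linarith
      have hA : 32 * l ^ 2 * V = 8 * V / M ^ 2 := by
        rw [hleq]; field_simp; ring
      have hB : l * s = s / (2 * M) := by
        rw [hleq]; field_simp
      have hC : 8 * V / M ^ 2 - s / (2 * M) + s / (128 * M) ≤ 0 := by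
        have h1024 : 1024 * V ≤ 63 * (M * s) := by nlinarith
        have heq2 : 8 * V / M ^ 2 - s / (2 * M) + s / (128 * M) =
            (1024 * V - 63 * (M * s)) / (128 * M ^ 2) := by
          field_simp
          ring
        rw [heq2]
        apply div_nonpos_of_nonpos_of_nonneg
        · linarith
        · positivity
      have : 32 * l ^ 2 * V - l * s ≤ -(s / (128 * M)) := by
        rw [hA, hB]; linarith
      exact this.trans (neg_le_neg (min_le_right _ _))
  calc P {ω | s ≤ ∑ t ∈ Finset.Icc 1 T, Z t ω}
      = ENNReal.ofReal (P {ω | s ≤ ∑ t ∈ Finset.Icc 1 T, Z t ω}).toReal :=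
        (ENNReal.ofReal_toReal (measure_ne_top P _)).symm
    _ ≤ ENNReal.ofReal (Real.exp (32 * l ^ 2 * V - l * s)) :=
        ENNReal.ofReal_le_ofReal hbound
    _ ≤ ENNReal.ofReal (Real.exp (-(min (s ^ 2 / (128 * V)) (s / (128 * M))))) :=
        ENNReal.ofReal_le_ofReal (Real.exp_le_exp.2 harith)
end
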